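/- arXiv:2005.06659 — 6 statements merged into one kernel-verified Lean document; each statement's English description precedes it below -/
import Mathlib

section
/- Let S_0F ⊆ S be the set of sorts s such that there is no finite tree of sort s. Define h : P(S) → P(S) by h(Y) = Y \ { s ∈ S | some generator f : s₁ × ⋯ × sₙ → s in F_s satisfies sᵢ ∉ Y for all i ∈ {1,…,n} }. Then h is monotone, S_0F is the greatest fixed point of h, and S_0F = ⋂_{d ∈ ℕ} h^{d+1}(S); moreover, every sort having a finite tree of depth d is excluded from h^{d+1}(S). -/
set_option linter.unusedVariables false


/-- A many-sorted signature: sorts and generators (function symbols),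
each generator `g` having argument sorts `src g` and target sort `tgt g`. -/
structure Sig where
  Srt : Type
  Gen : Type
  tgt : Gen → Srt
  src : Gen → List Srt

namespace Sig

variable (σ : Sig)

/-- The generators of a sort `s`. -/
def Gens (s : σ.Srt) : Set σ.Gen := { g | σ.tgt g = s }

/-- A labeling of positions (lists of natural numbers) by generators is a valid
tree labeling if children exist exactly according to arity and have the right sorts. -/
def IsLabeling (L : List ℕ → Option σ.Gen) : Prop :=
  (∀ p, L p = none → ∀ i, L (p ++ [i]) = none) ∧
  (∀ p g, L p = some g → ∀ i, ((L (p ++ [i])).isSome ↔ i < (σ.src g).length)) ∧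
  (∀ p g i g', L p = some g → L (p ++ [i]) = some g' →
      (σ.src g)[i]? = some (σ.tgt g'))

/-- A (possibly infinite) tree of sort `s`. -/
structure Tree (s : σ.Srt) where
  L : List ℕ → Option σ.Gen
  isLab : σ.IsLabeling L
  root : ∃ g, L [] = some g ∧ σ.tgt g = s

variable {σ}

/-- A tree is finite if it has finitely many nodes. -/
def Tree.IsFinite {s : σ.Srt} (t : σ.Tree s) : Prop :=
  { p : List ℕ | (t.L p).isSome }.Finite

/-- The tree has depth at most `d`. -/
def Tree.DepthLE {s : σ.Srt} (t : σ.Tree s) (d : ℕ) : Prop :=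
  ∀ p, (t.L p).isSome → p.length ≤ d

variable (σ)

/-- Build a tree with root labeled `g` from given immediate subtrees. -/
def build (g : σ.Gen) (c : ∀ i : Fin (σ.src g).length, σ.Tree ((σ.src g).get i)) :
    σ.Tree (σ.tgt g) where
  L := fun p =>
    match p with
    | [] => some g
    | i :: q => if h : i < (σ.src g).length then (c ⟨i, h⟩).L q else none
  isLab := by
    refine ⟨?_, ?_, ?_⟩
    · intro p hp i
      match p with
      | [] => simp at hp
      | j :: q =>
        simp only [List.cons_append]
        by_cases h : j < (σ.src g).length
        · simp only [dif_pos h] at hp ⊢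
          exact (c ⟨j, h⟩).isLab.1 q hp i
        · simp only [dif_neg h]
    · intro p g' hp i
      match p with
      | [] =>
        injection hp with hg
        subst hg
        by_cases h : i < (σ.src g).length
        · simp only [List.nil_append, dif_pos h]
          obtain ⟨g₀, h₀, -⟩ := (c ⟨i, h⟩).root
          simp [h₀, h]
        · simp [List.nil_append, dif_neg h, h]
      | j :: q =>
        by_cases h : j < (σ.src g).length
        · simp only [dif_pos h] at hp
          simp only [List.cons_append, dif_pos h]
          exact (c ⟨j, h⟩).isLab.2.1 q g' hp i
        · simp only [dif_neg h] at hp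
          cases hp
    · intro p g' i g'' hp hpi
      match p with
      | [] =>
        injection hp with hg
        subst hg
        by_cases h : i < (σ.src g).length
        · simp only [List.nil_append, dif_pos h] at hpi
          obtain ⟨g₀, h₀, htgt⟩ := (c ⟨i, h⟩).root
          rw [h₀, Option.some.injEq] at hpi
          subst hpi
          rw [List.getElem?_eq_getElem h]
          exact congrArg some htgt.symm
        · simp only [List.nil_append, dif_neg h] at hpi
          cases hpi
      | j :: q =>
        by_cases h : j < (σ.src g).length
        · simp only [dif_pos h] at hp
          simp only [List.cons_append, dif_pos h] at hpi
          exact (c ⟨j, h⟩).isLab.2.2 q g' i g'' hp hpi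
        · simp only [dif_neg h] at hp
          cases hp
  root := ⟨g, rfl, rfl⟩

/-- Sorts with no infinite trees. -/
def S0I : Set σ.Srt := { s | ∀ t : σ.Tree s, t.IsFinite }
/-- Sorts with no finite trees. -/
def S0F : Set σ.Srt := { s | ∀ t : σ.Tree s, ¬ t.IsFinite }
/-- Sorts with only finitely many finite trees. -/
def SFF : Set σ.Srt := { s | { t : σ.Tree s | t.IsFinite }.Finite }
/-- Sorts with only finitely many infinite trees. -/
def SFI : Set σ.Srt := { s | { t : σ.Tree s | ¬ t.IsFinite }.Finite }
/-- Sorts with exactly one infinite tree. -/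
def S1I : Set σ.Srt := { s | ∃! t : σ.Tree s, ¬ t.IsFinite }

/-- Terms of the (extended) first-order language of trees. Variables are
pairs of a sort and a number. -/
inductive Tm : σ.Srt → Type
  | var (s : σ.Srt) (n : ℕ) : Tm s
  | app (g : σ.Gen) (args : ∀ i : Fin (σ.src g).length, Tm ((σ.src g).get i)) :
      Tm (σ.tgt g)

/-- Valuations assign trees to (sorted) variables. -/
def Val := ∀ s : σ.Srt, ℕ → σ.Tree s

variable {σ}

/-- Evaluation of a term in the structure of trees under a valuation. -/
def Tm.eval (ρ : σ.Val) : ∀ {s : σ.Srt}, σ.Tm s → σ.Tree s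
  | _, .var s n => ρ s n
  | _, .app g args => σ.build g (fun i => (args i).eval ρ)

/-- The (sorted) free variables of a term. -/
def Tm.fv : ∀ {s : σ.Srt}, σ.Tm s → Set ((s : σ.Srt) × ℕ)
  | _, .var s n => {⟨s, n⟩}
  | _, .app _ args => ⋃ i, (args i).fv

/-- A term is flat if it is a variable or a generator applied to variables. -/
def Tm.IsFlat : ∀ {s : σ.Srt}, σ.Tm s → Prop
  | _, .var _ _ => True
  | _, .app g args => ∀ i : Fin (σ.src g).length, ∃ n, args i = Tm.var ((σ.src g).get i) n

/-- A term of the form `f(z̄)`. -/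
def Tm.IsApp : ∀ {s : σ.Srt}, σ.Tm s → Prop
  | _, .var _ _ => False
  | _, .app _ _ => True

open Classical in
/-- Update a valuation at one sorted variable. -/
noncomputable def updV (ρ : σ.Val) (s : σ.Srt) (n : ℕ) (t : σ.Tree s) : σ.Val :=
  fun s' m =>
    if h : s' = s then
      (if m = n then cast (congrArg σ.Tree h.symm) t else ρ s' m)
    else ρ s' m

variable (σ)

/-- Formulae of the extended first-order language of trees: equality,
the finiteness predicates `fin`, propositional connectives and sorted quantifiers. -/
inductive Fml : Type
  | tru : Fml
  | fls : Fml
  | eq {s : σ.Srt} (a b : σ.Tm s) : Fml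
  | fin {s : σ.Srt} (a : σ.Tm s) : Fml
  | not (φ : Fml) : Fml
  | and (φ ψ : Fml) : Fml
  | or (φ ψ : Fml) : Fml
  | imp (φ ψ : Fml) : Fml
  | ex (s : σ.Srt) (n : ℕ) (φ : Fml) : Fml
  | all (s : σ.Srt) (n : ℕ) (φ : Fml) : Fml

variable {σ}

/-- Satisfaction of a formula in the structure `𝒯` of trees under a valuation. -/
def Fml.Sat (ρ : σ.Val) : σ.Fml → Prop
  | .tru => True
  | .fls => False
  | .eq a b => a.eval ρ = b.eval ρ
  | .fin a => (a.eval ρ).IsFinite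
  | .not φ => ¬ φ.Sat ρ
  | .and φ ψ => φ.Sat ρ ∧ ψ.Sat ρ
  | .or φ ψ => φ.Sat ρ ∨ ψ.Sat ρ
  | .imp φ ψ => φ.Sat ρ → ψ.Sat ρ
  | .ex s n φ => ∃ t : σ.Tree s, φ.Sat (updV ρ s n t)
  | .all s n φ => ∀ t : σ.Tree s, φ.Sat (updV ρ s n t)

/-- The free variables of a formula. -/
def Fml.fv : σ.Fml → Set ((s : σ.Srt) × ℕ)
  | .tru => ∅
  | .fls => ∅
  | .eq a b => a.fv ∪ b.fv
  | .fin a => a.fv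
  | .not φ => φ.fv
  | .and φ ψ => φ.fv ∪ ψ.fv
  | .or φ ψ => φ.fv ∪ ψ.fv
  | .imp φ ψ => φ.fv ∪ ψ.fv
  | .ex s n φ => φ.fv \ {⟨s, n⟩}
  | .all s n φ => φ.fv \ {⟨s, n⟩}

/-- Two formulae are equivalent in the extended theory of trees if they are
satisfied by exactly the same valuations. -/
def FmlEquiv (φ ψ : σ.Fml) : Prop := ∀ ρ : σ.Val, φ.Sat ρ ↔ ψ.Sat ρ

end Sig

/-- The operator `h` of Algorithm 1 whose greatest fixed point is the set of sorts
with no finite trees. -/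
def hFun (σ : Sig) (Y : Set σ.Srt) : Set σ.Srt :=
  Y \ { s | ∃ g ∈ σ.Gens s, ∀ s' ∈ σ.src g, s' ∉ Y }

namespace SigAux

open Sig

variable {σ : Sig}

/-- Transport a tree along an equality of sorts. -/
def Tree.castSort {s s' : σ.Srt} (h : s = s') (t : σ.Tree s) : σ.Tree s' :=
  ⟨t.L, t.isLab, h ▸ t.root⟩

/-- The immediate subtree of a tree at child `i`. -/
def subtree {s : σ.Srt} (t : σ.Tree s) (g : σ.Gen) (hg : t.L [] = some g)
    (i : Fin (σ.src g).length) : σ.Tree ((σ.src g).get i) where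
  L := fun q => t.L (i :: q)
  isLab :=
    ⟨fun p hp j => t.isLab.1 ((i : ℕ) :: p) hp j,
     fun p g' hp j => t.isLab.2.1 ((i : ℕ) :: p) g' hp j,
     fun p g' j g'' hp hpj => t.isLab.2.2 ((i : ℕ) :: p) g' j g'' hp hpj⟩
  root := by
    have h1 : ((t.L ([] ++ [(i : ℕ)])).isSome) := by
      rw [t.isLab.2.1 [] g hg (i : ℕ)]; exact i.isLt
    obtain ⟨g', hg'⟩ := Option.isSome_iff_exists.mp h1
    refine ⟨g', hg', ?_⟩
    have h2 := t.isLab.2.2 [] g (i : ℕ) g' hg hg'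
    rw [List.getElem?_eq_getElem i.isLt] at h2
    exact (Option.some.injEq _ _ ▸ h2).symm

lemma subtree_isFinite {s : σ.Srt} (t : σ.Tree s) (g : σ.Gen) (hg : t.L [] = some g)
    (i : Fin (σ.src g).length) (hf : t.IsFinite) : (subtree t g hg i).IsFinite := by
  have : { q : List ℕ | ((subtree t g hg i).L q).isSome } =
      (fun q => (i : ℕ) :: q) ⁻¹' { p | (t.L p).isSome } := rfl
  rw [Tree.IsFinite, this]
  exact hf.preimage (fun a _ b _ h => by simpa using h)

lemma subtree_depthLE {s : σ.Srt} (t : σ.Tree s) (g : σ.Gen) (hg : t.L [] = some g)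
    (i : Fin (σ.src g).length) (d : ℕ) (hd : t.DepthLE (d + 1)) :
    (subtree t g hg i).DepthLE d := by
  intro q hq
  have := hd ((i : ℕ) :: q) hq
  simpa using this

lemma depthLE_zero_src_nil {s : σ.Srt} (t : σ.Tree s) (g : σ.Gen)
    (hg : t.L [] = some g) (hd : t.DepthLE 0) : σ.src g = [] := by
  by_contra h
  have hlen : 0 < (σ.src g).length := List.length_pos_iff.mpr h
  have h1 : ((t.L ([] ++ [0])).isSome) := by
    rw [t.isLab.2.1 [] g hg 0]; exact hlen
  have := hd [0] h1
  simp at this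

/-- A finite tree has bounded depth. -/
lemma exists_depthLE {s : σ.Srt} (t : σ.Tree s) (hf : t.IsFinite) :
    ∃ d, t.DepthLE d := by
  obtain ⟨d, hd⟩ := (hf.image List.length).bddAbove
  exact ⟨d, fun p hp => hd (Set.mem_image_of_mem _ hp)⟩

/-- Key induction: a sort with a finite tree of depth ≤ d is excluded from
`Z (d+1)` whenever `Z (k+1) = hFun σ (Z k)` for all `k`. -/
lemma key (Z : ℕ → Set σ.Srt) (hZ : ∀ k, Z (k + 1) = hFun σ (Z k)) :
    ∀ (d : ℕ) (s : σ.Srt) (t : σ.Tree s), t.IsFinite → t.DepthLE d →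
      s ∉ Z (d + 1) := by
  intro d
  induction d with
  | zero =>
    intro s t hfin hd hs
    rw [hZ 0] at hs
    obtain ⟨g, hg, hts⟩ := t.root
    have hnil := depthLE_zero_src_nil t g hg hd
    exact hs.2 ⟨g, hts, by rw [hnil]; simp⟩
  | succ d ih =>
    intro s t hfin hd hs
    rw [hZ (d + 1)] at hs
    obtain ⟨g, hg, hts⟩ := t.root
    refine hs.2 ⟨g, hts, fun s' hs' => ?_⟩
    obtain ⟨i, hi⟩ := List.mem_iff_get.mp hs'
    rw [← hi]
    exact ih _ (subtree t g hg i) (subtree_isFinite t g hg i hfin)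
      (subtree_depthLE t g hg i d hd)

/-- If every child sort has a finite tree, `build` yields a finite tree. -/
lemma build_isFinite (g : σ.Gen)
    (c : ∀ i : Fin (σ.src g).length, σ.Tree ((σ.src g).get i))
    (hc : ∀ i, (c i).IsFinite) : (σ.build g c).IsFinite := by
  have hsub : { p : List ℕ | ((σ.build g c).L p).isSome } ⊆
      insert [] (⋃ i : Fin (σ.src g).length,
        (fun q => (i : ℕ) :: q) '' { q | ((c i).L q).isSome }) := by
    intro p hp
    match p with
    | [] => exact Set.mem_insert _ _
    | j :: q =>
      simp only [Set.mem_setOf_eq, Sig.build] at hp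
      by_cases h : j < (σ.src g).length
      · simp only [dif_pos h] at hp
        exact Set.mem_insert_iff.mpr (Or.inr
          (Set.mem_iUnion.mpr ⟨⟨j, h⟩, ⟨q, hp, rfl⟩⟩))
      · simp only [dif_neg h] at hp
        simp at hp
  exact Set.Finite.subset
    ((Set.finite_iUnion fun i => (hc i).image _).insert []) hsub

lemma hFun_monotone (σ : Sig) : Monotone (hFun σ) := by
  intro Y Y' hYY' s hs
  refine ⟨hYY' hs.1, fun ⟨g, hg, hall⟩ => hs.2 ⟨g, hg, fun s' hs' h => hall s' hs' (hYY' h)⟩⟩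

lemma hFun_S0F (σ : Sig) : hFun σ (Sig.S0F σ) = Sig.S0F σ := by
  ext s
  constructor
  · exact fun h => h.1
  · intro hs
    refine ⟨hs, ?_⟩
    rintro ⟨g, hg, hall⟩
    have hc : ∀ i : Fin (σ.src g).length,
        ∃ t : σ.Tree ((σ.src g).get i), t.IsFinite := by
      intro i
      have h1 := hall _ (List.get_mem (σ.src g) i)
      simp only [Sig.S0F, Set.mem_setOf_eq, not_forall, not_not] at h1
      exact h1
    choose c hcf using hc
    exact hs (Tree.castSort hg (σ.build g c)) (build_isFinite g c hcf)

end SigAux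

/-- `S_0F` is the greatest fixed point of `h`, obtained as the
intersection of the finite iterations of `h` on `S`; moreover every sort having a
finite tree of depth ≤ d is excluded from `h^[d+1] S`. -/
theorem S0F_gfp (σ : Sig) :
    Monotone (hFun σ) ∧
    hFun σ (Sig.S0F σ) = Sig.S0F σ ∧
    (∀ Y : Set σ.Srt, hFun σ Y = Y → Y ⊆ Sig.S0F σ) ∧
    Sig.S0F σ = ⋂ d : ℕ, (hFun σ)^[d + 1] Set.univ ∧
    ∀ (s : σ.Srt) (d : ℕ) (t : σ.Tree s), t.IsFinite → t.DepthLE d →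
      s ∉ (hFun σ)^[d + 1] Set.univ := by
  have hmono := SigAux.hFun_monotone σ
  have hfix := SigAux.hFun_S0F σ
  have hkey : ∀ (s : σ.Srt) (d : ℕ) (t : σ.Tree s), t.IsFinite → t.DepthLE d →
      s ∉ (hFun σ)^[d + 1] Set.univ := by
    intro s d t hfin hd
    exact SigAux.key (fun k => (hFun σ)^[k] Set.univ)
      (fun k => Function.iterate_succ_apply' (hFun σ) k Set.univ) d s t hfin hd
  have hsub : Sig.S0F σ ⊆ ⋂ d : ℕ, (hFun σ)^[d + 1] Set.univ := by
    intro s hs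
    refine Set.mem_iInter.mpr fun d => ?_
    have h1 : (hFun σ)^[d + 1] (Sig.S0F σ) = Sig.S0F σ :=
      Function.iterate_fixed hfix (d + 1)
    have h2 : (hFun σ)^[d + 1] (Sig.S0F σ) ⊆ (hFun σ)^[d + 1] Set.univ :=
      hmono.iterate (d + 1) (Set.subset_univ _)
    exact h2 (h1.symm ▸ hs)
  have hsup : ⋂ d : ℕ, (hFun σ)^[d + 1] Set.univ ⊆ Sig.S0F σ := by
    intro s hs t hfin
    obtain ⟨d, hd⟩ := SigAux.exists_depthLE t hfin
    exact hkey s d t hfin hd (Set.mem_iInter.mp hs d)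
  refine ⟨hmono, hfix, ?_, le_antisymm hsub hsup, hkey⟩
  intro Y hY s hs
  have h1 : ∀ d : ℕ, s ∈ (hFun σ)^[d + 1] Set.univ := by
    intro d
    have h2 : (hFun σ)^[d + 1] Y = Y := Function.iterate_fixed hY (d + 1)
    exact hmono.iterate (d + 1) (Set.subset_univ Y) (h2.symm ▸ hs)
  exact hsup (Set.mem_iInter.mpr h1)
end

section
/- Let S_FF ⊆ S be the set of sorts having only finitely many finite trees, and let S_0F be the set of sorts with no finite trees. For each sort s, let F_s^{infin} = { f : s₁ × ⋯ × sₙ → s ∈ F_s | some sᵢ ∈ S_0F } (the generators of s that build only infinite trees). Define f : P(S) → P(S) by f(X) = X ∪ S_0F ∪ { s ∈ S | F_s \ F_s^{infin} is finite and every generator g : s₁ × ⋯ × sₙ → s in F_s \ F_s^{infin} satisfies sᵢ ∈ X for all i }. Then f is monotone and S_FF is the least fixed point of f; moreover S_FF = ⋃_{d ∈ ℕ} f^{d+1}(∅). -/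
set_option linter.unusedVariables false


/-- The generators of sort `s` that build only infinite trees (some argument sort
has no finite trees). -/
def FinfinF (σ : Sig) (s : σ.Srt) : Set σ.Gen :=
  { g | g ∈ σ.Gens s ∧ ∃ s' ∈ σ.src g, s' ∈ Sig.S0F σ }

/-- The operator `f` whose least fixed point is the set of sorts with only
finitely many finite trees. -/
def fFF (σ : Sig) (X : Set σ.Srt) : Set σ.Srt :=
  X ∪ Sig.S0F σ ∪
    { s | (σ.Gens s \ FinfinF σ s).Finite ∧
      ∀ g ∈ σ.Gens s \ FinfinF σ s, ∀ s' ∈ σ.src g, s' ∈ X }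

namespace SFFAux

open Sig

variable {σ : Sig}

theorem tree_ext {s : σ.Srt} {t t' : σ.Tree s} (h : t.L = t'.L) : t = t' := by
  cases t; cases t'; simp_all

theorem none_append {L : List ℕ → Option σ.Gen} (h : σ.IsLabeling L) {p : List ℕ}
    (hp : L p = none) (q : List ℕ) : L (p ++ q) = none := by
  induction q using List.reverseRecOn with
  | nil => simpa using hp
  | append_singleton q j ih => rw [← List.append_assoc]; exact h.1 _ ih j

/-- the `i`-th immediate subtree -/
def child {s : σ.Srt} (t : σ.Tree s) (g : σ.Gen) (hg : t.L [] = some g)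
    (i : Fin (σ.src g).length) : σ.Tree ((σ.src g).get i) where
  L := fun p => t.L (i.1 :: p)
  isLab := by
    obtain ⟨h1, h2, h3⟩ := t.isLab
    exact ⟨fun p hp j => h1 (i.1 :: p) hp j, fun p g' hp j => h2 (i.1 :: p) g' hp j,
      fun p g' j g'' hp hpj => h3 (i.1 :: p) g' j g'' hp hpj⟩
  root := by
    have h2 := t.isLab.2.1 [] g hg i.1
    have hsome : (t.L [i.1]).isSome := h2.mpr i.isLt
    obtain ⟨g', hg'⟩ := Option.isSome_iff_exists.mp hsome
    have h3 := t.isLab.2.2 [] g i.1 g' hg hg'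
    rw [List.getElem?_eq_getElem i.isLt] at h3
    exact ⟨g', hg', by simpa [List.get_eq_getElem] using (Option.some_injective _ h3).symm⟩

theorem child_finite {s : σ.Srt} {t : σ.Tree s} {g : σ.Gen} (hg : t.L [] = some g)
    (i : Fin (σ.src g).length) (ht : t.IsFinite) : (child t g hg i).IsFinite := by
  have : {p | ((child t g hg i).L p).isSome} = (List.cons i.1) ⁻¹' {p | (t.L p).isSome} := rfl
  rw [Tree.IsFinite, this]
  exact ht.preimage (Set.injOn_of_injective (fun a b hab => by injection hab))

theorem eq_of_root_children {s : σ.Srt} {t t' : σ.Tree s} {g : σ.Gen}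
    (hg : t.L [] = some g) (hg' : t'.L [] = some g)
    (hc : ∀ i : Fin (σ.src g).length, (child t g hg i).L = (child t' g hg' i).L) :
    t = t' := by
  apply tree_ext
  funext p
  match p with
  | [] => rw [hg, hg']
  | i :: q =>
    by_cases h : i < (σ.src g).length
    · exact congrFun (hc ⟨i, h⟩) q
    · have h1 : t.L [i] = none := by
        have := t.isLab.2.1 [] g hg i
        simpa [h] using Option.not_isSome_iff_eq_none.mp (fun hs => h (this.mp hs))
      have h2 : t'.L [i] = none := by
        have := t'.isLab.2.1 [] g hg' i
        simpa [h] using Option.not_isSome_iff_eq_none.mp (fun hs => h (this.mp hs))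
      have e1 := none_append t.isLab h1 q
      have e2 := none_append t'.isLab h2 q
      simpa using e1.trans e2.symm

/-- cast a tree along an equality of sorts -/
def Tree.cast {s s' : σ.Srt} (h : s = s') (t : σ.Tree s) : σ.Tree s' :=
  ⟨t.L, t.isLab, h ▸ t.root⟩

theorem build_L_nil (g : σ.Gen) (c) : (σ.build g c).L [] = some g := rfl

theorem build_L_cons (g : σ.Gen) (c) {i : ℕ} (h : i < (σ.src g).length) (q : List ℕ) :
    (σ.build g c).L (i :: q) = (c ⟨i, h⟩).L q := by
  show (if h : i < (σ.src g).length then (c ⟨i, h⟩).L q else none) = _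
  rw [dif_pos h]

theorem build_finite {g : σ.Gen} {c : ∀ i : Fin (σ.src g).length, σ.Tree ((σ.src g).get i)}
    (hc : ∀ i, (c i).IsFinite) : (σ.build g c).IsFinite := by
  apply Set.Finite.subset
    (Set.Finite.insert ([] : List ℕ)
      (Set.finite_iUnion (fun i : Fin (σ.src g).length =>
        ((hc i).image (List.cons i.1)))))
  intro p hp
  match p with
  | [] => exact Set.mem_insert _ _
  | i :: q =>
    by_cases h : i < (σ.src g).length
    · rw [Set.mem_setOf_eq, build_L_cons g c h] at hp
      exact Set.mem_insert_iff.mpr (Or.inr (Set.mem_iUnion.mpr ⟨⟨i, h⟩, ⟨q, hp, rfl⟩⟩))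
    · exfalso
      have : (σ.build g c).L (i :: q) = none := by
        show (if h : i < (σ.src g).length then (c ⟨i, h⟩).L q else none) = none
        rw [dif_neg h]
      rw [Set.mem_setOf_eq, this] at hp
      exact (Option.not_isSome_iff_eq_none.mpr rfl) hp

theorem args_have_finite {s : σ.Srt} {g : σ.Gen} (hg : σ.tgt g = s)
    (hnf : g ∉ FinfinF σ s) (j : Fin (σ.src g).length) :
    ∃ w : σ.Tree ((σ.src g).get j), w.IsFinite := by
  by_contra h
  push_neg at h
  exact hnf ⟨hg, (σ.src g).get j, List.get_mem (σ.src g) j, fun t ht => (h t) ht⟩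

/-- a finite tree of sort `s` with root `g` -/
theorem exists_finite_tree_root {s : σ.Srt} {g : σ.Gen} (hg : σ.tgt g = s)
    (hnf : g ∉ FinfinF σ s) :
    ∃ t : σ.Tree s, t.IsFinite ∧ t.L [] = some g := by
  classical
  choose w hw using args_have_finite hg hnf
  refine ⟨Tree.cast hg (σ.build g w), ?_, rfl⟩
  exact build_finite hw

/-- embedding of trees of an argument sort into trees of the target sort -/
theorem arg_emb {s : σ.Srt} {g : σ.Gen} (hg : σ.tgt g = s)
    (hnf : g ∉ FinfinF σ s) (i : Fin (σ.src g).length) :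
    ∃ Φ : σ.Tree ((σ.src g).get i) → σ.Tree s,
      (∀ u, u.IsFinite → (Φ u).IsFinite) ∧
      (∀ u p, (Φ u).L (i.1 :: p) = u.L p) := by
  classical
  choose w hw using args_have_finite hg hnf
  refine ⟨fun u => Tree.cast hg (σ.build g (fun j =>
      if h : j = i then Tree.cast (congrArg _ h.symm) u else w j)), ?_, ?_⟩
  · intro u hu
    have : (σ.build g (fun j =>
        if h : j = i then Tree.cast (congrArg _ h.symm) u else w j)).IsFinite := by
      apply build_finite
      intro j
      by_cases h : j = i
      · rw [dif_pos h]
        subst h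
        exact hu
      · rw [dif_neg h]
        exact hw j
    exact this
  · intro u p
    show (σ.build g (fun j =>
        if h : j = i then Tree.cast (congrArg _ h.symm) u else w j)).L (i.1 :: p) = u.L p
    rw [build_L_cons g _ i.isLt p]
    simp only [Fin.eta]
    rw [dif_pos trivial]
    rfl


theorem root_mem {s : σ.Srt} {t : σ.Tree s} (ht : t.IsFinite) {g : σ.Gen}
    (hg : t.L [] = some g) : g ∈ σ.Gens s \ FinfinF σ s := by
  obtain ⟨g', hg', htgt⟩ := t.root
  rw [hg] at hg'
  injection hg' with e
  subst e
  refine ⟨htgt, ?_⟩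
  rintro ⟨-, s', hs'src, hs'S0F⟩
  obtain ⟨i, hi⟩ := List.mem_iff_get.mp hs'src
  have hfin : (child t g hg i).IsFinite := child_finite hg i ht
  exact hs'S0F (Tree.cast hi (child t g hg i)) hfin

theorem SFF_step {s : σ.Srt} (h1 : (σ.Gens s \ FinfinF σ s).Finite)
    (h2 : ∀ g ∈ σ.Gens s \ FinfinF σ s, ∀ s' ∈ σ.src g, s' ∈ σ.SFF) : s ∈ σ.SFF := by
  show {t : σ.Tree s | t.IsFinite}.Finite
  have hsub : {t : σ.Tree s | t.IsFinite} ⊆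
      ⋃ g ∈ σ.Gens s \ FinfinF σ s, {t : σ.Tree s | t.IsFinite ∧ t.L [] = some g} := by
    intro t ht
    obtain ⟨g, hg, -⟩ := t.root
    exact Set.mem_biUnion (root_mem ht hg) ⟨ht, hg⟩
  refine Set.Finite.subset (Set.Finite.biUnion h1 ?_) hsub
  intro g hgmem
  rw [← Set.finite_coe_iff]
  haveI : ∀ i : Fin (σ.src g).length, Finite {u : σ.Tree ((σ.src g).get i) // u.IsFinite} := by
    intro i
    exact Set.Finite.to_subtype (h2 g hgmem ((σ.src g).get i) (List.get_mem (σ.src g) i))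
  apply Finite.of_injective (fun t : {t : σ.Tree s // t.IsFinite ∧ t.L [] = some g} =>
    (fun i => ⟨child t.1 g t.2.2 i, child_finite t.2.2 i t.2.1⟩ :
      ∀ i : Fin (σ.src g).length, {u : σ.Tree ((σ.src g).get i) // u.IsFinite}))
  intro t t' h
  apply Subtype.ext
  apply eq_of_root_children t.2.2 t'.2.2
  intro i
  exact congrArg (fun x => x.1.L) (congrFun h i)

theorem gens_finite {s : σ.Srt} (hs : s ∈ σ.SFF) :
    (σ.Gens s \ FinfinF σ s).Finite := by
  classical
  rw [← Set.finite_coe_iff]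
  haveI : Finite {t : σ.Tree s // t.IsFinite} := Set.Finite.to_subtype hs
  choose T hT1 hT2 using fun g : ↥(σ.Gens s \ FinfinF σ s) =>
    exists_finite_tree_root (g.2.1 : σ.tgt g.1 = s) g.2.2
  apply Finite.of_injective (fun g => (⟨T g, hT1 g⟩ : {t : σ.Tree s // t.IsFinite}))
  intro a b h
  have : (T a).L [] = (T b).L [] := congrArg (fun t => t.1.L []) h
  rw [hT2 a, hT2 b] at this
  injection this with e
  exact Subtype.ext e

theorem arg_SFF {s : σ.Srt} (hs : s ∈ σ.SFF) {g : σ.Gen} (hg : σ.tgt g = s)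
    (hnf : g ∉ FinfinF σ s) (i : Fin (σ.src g).length) :
    (σ.src g).get i ∈ σ.SFF := by
  obtain ⟨Φ, hfin, hL⟩ := arg_emb hg hnf i
  have hinj : Function.Injective Φ := by
    intro u u' h
    apply tree_ext
    funext p
    rw [← hL u p, ← hL u' p, h]
  show {u : σ.Tree ((σ.src g).get i) | u.IsFinite}.Finite
  apply Set.Finite.of_finite_image (f := Φ)
  · apply Set.Finite.subset hs
    rintro _ ⟨u, hu, rfl⟩
    exact hfin u hu
  · exact Set.injOn_of_injective hinj

theorem arg_depth {s : σ.Srt} {g : σ.Gen} (hg : σ.tgt g = s)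
    (hnf : g ∉ FinfinF σ s) (i : Fin (σ.src g).length) {d : ℕ}
    (hd : ∀ t : σ.Tree s, t.IsFinite → t.DepthLE (d + 1)) :
    ∀ u : σ.Tree ((σ.src g).get i), u.IsFinite → u.DepthLE d := by
  obtain ⟨Φ, hfin, hL⟩ := arg_emb hg hnf i
  intro u hu p hp
  have h1 : ((Φ u).L (i.1 :: p)).isSome := by rw [hL]; exact hp
  have h2 := hd (Φ u) (hfin u hu) (i.1 :: p) h1
  simp only [List.length_cons] at h2
  omega

theorem exists_depth_bound {s : σ.Srt} (hs : s ∈ σ.SFF) :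
    ∃ d, ∀ t : σ.Tree s, t.IsFinite → t.DepthLE d := by
  classical
  haveI : Finite {t : σ.Tree s // t.IsFinite} := Set.Finite.to_subtype hs
  have hone : ∀ t : {t : σ.Tree s // t.IsFinite}, ∃ d, t.1.DepthLE d := by
    intro t
    obtain ⟨d, hd⟩ := (t.2.image List.length).bddAbove
    exact ⟨d, fun p hp => hd ⟨p, hp, rfl⟩⟩
  choose f hf using hone
  obtain ⟨D, hD⟩ := (Set.finite_range f).bddAbove
  exact ⟨D, fun t ht p hp => le_trans (hf ⟨t, ht⟩ p hp) (hD ⟨⟨t, ht⟩, rfl⟩)⟩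

theorem mem_iter (σ : Sig) : ∀ d : ℕ, ∀ s : σ.Srt, s ∈ σ.SFF →
    (∀ t : σ.Tree s, t.IsFinite → t.DepthLE d) → s ∈ (fFF σ)^[d + 1] ∅ := by
  intro d
  induction d with
  | zero =>
    intro s hs hd
    rw [Function.iterate_one]
    by_cases hns : s ∈ Sig.S0F σ
    · exact Set.mem_union_left _ (Set.mem_union_right _ hns)
    · refine Set.mem_union_right _ ⟨gens_finite hs, ?_⟩
      intro g hgm s' hs'
      exfalso
      obtain ⟨i, hi⟩ := List.mem_iff_get.mp hs'
      obtain ⟨Φ, hfin, hL⟩ := arg_emb hgm.1 hgm.2 i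
      obtain ⟨w, hw⟩ := args_have_finite hgm.1 hgm.2 i
      obtain ⟨g', hg', -⟩ := w.root
      have h1 : ((Φ w).L [i.1]).isSome := by
        rw [show ([i.1] : List ℕ) = i.1 :: [] from rfl, hL, hg']
        rfl
      have h2 := hd (Φ w) (hfin w hw) [i.1] h1
      simp at h2
  | succ d IH =>
    intro s hs hd
    rw [Function.iterate_succ_apply']
    by_cases hns : s ∈ Sig.S0F σ
    · exact Set.mem_union_left _ (Set.mem_union_right _ hns)
    · refine Set.mem_union_right _ ⟨gens_finite hs, ?_⟩
      intro g hgm s' hs'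
      obtain ⟨i, hi⟩ := List.mem_iff_get.mp hs'
      exact hi ▸ IH _ (arg_SFF hs hgm.1 hgm.2 i) (arg_depth hgm.1 hgm.2 i hd)

end SFFAux

/-- `S_FF` is the least fixed point of `f`, obtained as the union
of the finite iterations of `f` on `∅`. -/
theorem SFF_lfp (σ : Sig) :
    Monotone (fFF σ) ∧
    fFF σ (Sig.SFF σ) = Sig.SFF σ ∧
    (∀ X : Set σ.Srt, fFF σ X = X → Sig.SFF σ ⊆ X) ∧
    Sig.SFF σ = ⋃ d : ℕ, (fFF σ)^[d + 1] ∅ := by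
  have hmono : Monotone (fFF σ) := by
    intro X Y hXY s hs
    simp only [fFF, Set.mem_union, Set.mem_setOf_eq] at hs ⊢
    rcases hs with (h | h) | h
    · exact Or.inl (Or.inl (hXY h))
    · exact Or.inl (Or.inr h)
    · exact Or.inr ⟨h.1, fun g hg s' hs' => hXY (h.2 g hg s' hs')⟩
  have hfix : fFF σ (Sig.SFF σ) = Sig.SFF σ := by
    apply Set.Subset.antisymm
    · intro s hs
      simp only [fFF, Set.mem_union, Set.mem_setOf_eq] at hs
      rcases hs with (h | h) | h
      · exact h
      · exact Set.Finite.subset Set.finite_empty (fun t ht => absurd ht (h t))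
      · exact SFFAux.SFF_step h.1 h.2
    · intro s hs
      exact Set.mem_union_left _ (Set.mem_union_left _ hs)
  have hiter : ∀ X : Set σ.Srt, fFF σ X = X → ∀ d, (fFF σ)^[d] ∅ ⊆ X := by
    intro X hX d
    induction d with
    | zero => simp
    | succ d ih =>
      rw [Function.iterate_succ_apply', ← hX]
      exact hmono ih
  have hsub : Sig.SFF σ ⊆ ⋃ d : ℕ, (fFF σ)^[d + 1] ∅ := by
    intro s hs
    obtain ⟨d, hd⟩ := SFFAux.exists_depth_bound hs
    exact Set.mem_iUnion.mpr ⟨d, SFFAux.mem_iter σ d s hs hd⟩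
  refine ⟨hmono, hfix, ?_, ?_⟩
  · intro X hX
    exact hsub.trans (Set.iUnion_subset fun d => hiter X hX (d + 1))
  · exact Set.Subset.antisymm hsub (Set.iUnion_subset fun d => hiter _ hfix (d + 1))
end

section
/- Assume every sort has at least two generators. Let S_0I be the set of sorts with no infinite trees and S_1I ⊆ S the set of sorts having exactly one infinite tree. Define f : P(S \ S_0I) → P(S \ S_0I) by f(X) = { s ∈ X | there is a unary generator g : s₁ → s in F_s with s₁ ∈ X such that every other generator g' : s₁' × ⋯ × sₙ' → s of s satisfies sᵢ' ∈ S_0I for all i }. Then f is monotone, S_1I is the greatest fixed point of f, and S_1I = ⋂_{d ∈ ℕ} f^{d+1}(S \ S_0I). Moreover, for each s ∈ S_1I, the unique infinite tree u_s of sort s satisfies u_s = g_s(u_{s₁}), where g_s : s₁ → s is the unique unary generator of s with s₁ ∈ S_1I. -/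
set_option linter.unusedVariables false


/-- The operator `f` of the algorithm computing the sorts with exactly one
infinite tree. -/
def fOne (σ : Sig) (X : Set σ.Srt) : Set σ.Srt :=
  { s | s ∈ X ∧ ∃ g ∈ σ.Gens s, ∃ s₁ : σ.Srt, σ.src g = [s₁] ∧ s₁ ∈ X ∧
      ∀ g' ∈ σ.Gens s, g' ≠ g → ∀ s' ∈ σ.src g', s' ∈ Sig.S0I σ }


namespace Sig

variable {σ : Sig}

lemma none_append {L : List ℕ → Option σ.Gen} (hL : σ.IsLabeling L) {p : List ℕ}
    (hp : L p = none) (r : List ℕ) : L (p ++ r) = none := by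
  induction r using List.reverseRecOn with
  | nil => simpa using hp
  | append_singleton r j ih => rw [← List.append_assoc]; exact hL.1 _ ih j

lemma Tree.ext' {s : σ.Srt} {t u : σ.Tree s} (h : t.L = u.L) : t = u := by
  cases t; cases u; cases h; rfl

/-- Cast a tree along an equality of sorts; the labeling is unchanged. -/
def Tree.castS {s s' : σ.Srt} (h : s = s') (t : σ.Tree s) : σ.Tree s' :=
  ⟨t.L, t.isLab, h ▸ t.root⟩

@[simp] lemma Tree.castS_L {s s' : σ.Srt} (h : s = s') (t : σ.Tree s) :
    (t.castS h).L = t.L := rfl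

/-- The immediate subtree of `t` at child `i`. -/
def Tree.child {s : σ.Srt} (t : σ.Tree s) {g : σ.Gen} (hg : t.L [] = some g)
    (i : Fin (σ.src g).length) : σ.Tree ((σ.src g).get i) where
  L q := t.L (i.val :: q)
  isLab := by
    refine ⟨?_, ?_, ?_⟩
    · intro p hp j
      have := t.isLab.1 (i.val :: p) hp j
      simpa using this
    · intro p g' hp j
      have := t.isLab.2.1 (i.val :: p) g' hp j
      simpa using this
    · intro p g' j g'' hp hpj
      refine t.isLab.2.2 (i.val :: p) g' j g'' hp ?_
      simpa using hpj
  root := by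
    have hs : (t.L ([] ++ [i.val])).isSome := by
      rw [(t.isLab.2.1 [] g hg i.val)]; exact i.isLt
    obtain ⟨g', hg'⟩ := Option.isSome_iff_exists.mp hs
    refine ⟨g', by simpa using hg', ?_⟩
    have := t.isLab.2.2 [] g i.val g' hg (by simpa using hg')
    rw [List.getElem?_eq_getElem i.isLt] at this
    exact (Option.some.injEq _ _ ▸ this.symm) ▸ rfl
  
@[simp] lemma Tree.child_L {s : σ.Srt} (t : σ.Tree s) {g : σ.Gen} (hg : t.L [] = some g)
    (i : Fin (σ.src g).length) (q : List ℕ) : (t.child hg i).L q = t.L (i.val :: q) := rfl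

lemma Tree.child_finite {s : σ.Srt} {t : σ.Tree s} {g : σ.Gen} (hg : t.L [] = some g)
    (i : Fin (σ.src g).length) (ht : t.IsFinite) : (t.child hg i).IsFinite := by
  have : { q : List ℕ | ((t.child hg i).L q).isSome } =
      (fun q : List ℕ => i.val :: q) ⁻¹' { p | (t.L p).isSome } := rfl
  rw [Tree.IsFinite, this]
  exact ht.preimage (Function.Injective.injOn (fun a b h => (List.cons.injEq _ _ _ _).mp h |>.2))

lemma Tree.finite_of_children {s : σ.Srt} {t : σ.Tree s} {g : σ.Gen} (hg : t.L [] = some g)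
    (h : ∀ i : Fin (σ.src g).length, (t.child hg i).IsFinite) : t.IsFinite := by
  have hsub : { p : List ℕ | (t.L p).isSome } ⊆
      insert [] (⋃ i : Fin (σ.src g).length, (fun q : List ℕ => i.val :: q) ''
        { q | ((t.child hg i).L q).isSome }) := by
    intro p hp
    match p with
    | [] => exact Set.mem_insert _ _
    | j :: q =>
      have hj : (t.L [j]).isSome := by
        by_contra hc
        have : t.L [j] = none := Option.not_isSome_iff_eq_none.mp hc
        have := none_append t.isLab this q
        simp only [List.singleton_append] at this
        simp only [Set.mem_setOf_eq, this] at hp; simp at hp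
      have hjlt : j < (σ.src g).length := by
        have := t.isLab.2.1 [] g hg j
        simpa using this.mp (by simpa using hj)
      refine Set.mem_insert_iff.mpr (Or.inr ?_)
      exact Set.mem_iUnion.mpr ⟨⟨j, hjlt⟩, ⟨q, hp, rfl⟩⟩
  exact Set.Finite.subset (Set.Finite.insert _ (Set.finite_iUnion fun i => (h i).image _)) hsub

lemma Tree.exists_infinite_child {s : σ.Srt} {t : σ.Tree s} {g : σ.Gen}
    (hg : t.L [] = some g) (ht : ¬ t.IsFinite) :
    ∃ i : Fin (σ.src g).length, ¬ (t.child hg i).IsFinite := by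
  by_contra hc
  push_neg at hc
  exact ht (t.finite_of_children hg hc)

/-- Canonical labeling given a choice of generator for each sort. -/
def canonL (pk : σ.Srt → σ.Gen) : List ℕ → σ.Srt → Option σ.Gen
  | [], s => some (pk s)
  | i :: q, s =>
      if h : i < (σ.src (pk s)).length then canonL pk q ((σ.src (pk s)).get ⟨i, h⟩) else none

lemma canonL_c1 (pk : σ.Srt → σ.Gen) (p : List ℕ) : ∀ s : σ.Srt, canonL pk p s = none →
    ∀ i, canonL pk (p ++ [i]) s = none := by
  induction p with
  | nil => intro s h; simp [canonL] at h
  | cons j q ih =>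
    intro s h i
    simp only [canonL, List.cons_append] at h ⊢
    by_cases hj : j < (σ.src (pk s)).length
    · rw [dif_pos hj] at h ⊢; exact ih _ h i
    · rw [dif_neg hj]

lemma canonL_c2 (pk : σ.Srt → σ.Gen) (p : List ℕ) : ∀ (s : σ.Srt) (g : σ.Gen),
    canonL pk p s = some g → ∀ i, (canonL pk (p ++ [i]) s).isSome ↔ i < (σ.src g).length := by
  induction p with
  | nil =>
    intro s g h i
    simp only [canonL] at h
    injection h with h; subst h
    simp only [List.nil_append, canonL]
    by_cases hi : i < (σ.src (pk s)).length
    · rw [dif_pos hi]; simp [canonL, hi]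
    · rw [dif_neg hi]; simp [hi]
  | cons j q ih =>
    intro s g h i
    simp only [canonL, List.cons_append] at h ⊢
    by_cases hj : j < (σ.src (pk s)).length
    · rw [dif_pos hj] at h ⊢; exact ih _ g h i
    · rw [dif_neg hj] at h; cases h

lemma canonL_c3 (pk : σ.Srt → σ.Gen) (hpk : ∀ s, σ.tgt (pk s) = s) (p : List ℕ) :
    ∀ (s : σ.Srt) (g : σ.Gen) (i : ℕ) (g' : σ.Gen), canonL pk p s = some g →
      canonL pk (p ++ [i]) s = some g' → (σ.src g)[i]? = some (σ.tgt g') := by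
  induction p with
  | nil =>
    intro s g i g' h h'
    simp only [canonL] at h
    injection h with h; subst h
    simp only [List.nil_append, canonL] at h'
    by_cases hi : i < (σ.src (pk s)).length
    · rw [dif_pos hi] at h'
      injection h' with h'; subst h'
      rw [List.getElem?_eq_getElem hi, hpk]
      rfl
    · rw [dif_neg hi] at h'; cases h'
  | cons j q ih =>
    intro s g i g' h h'
    simp only [canonL, List.cons_append] at h h'
    by_cases hj : j < (σ.src (pk s)).length
    · rw [dif_pos hj] at h h'; exact ih _ g i g' h h'
    · rw [dif_neg hj] at h; cases h

/-- The canonical tree of a sort. -/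
def canon (pk : σ.Srt → σ.Gen) (hpk : ∀ s, σ.tgt (pk s) = s) (s : σ.Srt) : σ.Tree s where
  L p := canonL pk p s
  isLab := ⟨fun p hp i => canonL_c1 pk p s hp i, fun p g hp i => canonL_c2 pk p s g hp i,
    fun p g i g' hp hpi => canonL_c3 pk hpk p s g i g' hp hpi⟩
  root := ⟨pk s, rfl, hpk s⟩

/-- `build` with the target sort given by an equation. -/
def buildC {s : σ.Srt} (g : σ.Gen) (hg : σ.tgt g = s)
    (c : ∀ i : Fin (σ.src g).length, σ.Tree ((σ.src g).get i)) : σ.Tree s :=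
  ⟨(σ.build g c).L, (σ.build g c).isLab, ⟨g, rfl, hg⟩⟩

@[simp] lemma buildC_L_nil {s : σ.Srt} (g : σ.Gen) (hg : σ.tgt g = s) (c) :
    (buildC g hg c).L [] = some g := rfl

@[simp] lemma buildC_L_cons {s : σ.Srt} (g : σ.Gen) (hg : σ.tgt g = s) (c) (i : ℕ) (q : List ℕ) :
    (buildC g hg c).L (i :: q) =
      if h : i < (σ.src g).length then (c ⟨i, h⟩).L q else none := rfl

lemma buildC_not_finite {s : σ.Srt} (g : σ.Gen) (hg : σ.tgt g = s) (c)
    (i : Fin (σ.src g).length) (hi : ¬ (c i).IsFinite) : ¬ (buildC g hg c).IsFinite := by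
  intro hfin
  apply hi
  have heq : { q : List ℕ | ((c i).L q).isSome } =
      (fun q : List ℕ => i.val :: q) ⁻¹' { p | ((buildC g hg c).L p).isSome } := by
    ext q
    simp only [Set.mem_setOf_eq, Set.mem_preimage, buildC_L_cons, dif_pos i.isLt, Fin.eta]
  rw [Tree.IsFinite, heq]
  exact hfin.preimage (Function.Injective.injOn (fun a b h => (List.cons.injEq _ _ _ _).mp h |>.2))

/-- Build a tree from a unary generator and one subtree. -/
def build1 {s s₁ : σ.Srt} (g : σ.Gen) (hg : σ.tgt g = s) (hsrc : σ.src g = [s₁])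
    (t₁ : σ.Tree s₁) : σ.Tree s :=
  buildC g hg (fun i => Tree.castS (by
    obtain ⟨n, hn⟩ := i
    have h1 : (σ.src g)[n]? = some ((σ.src g).get ⟨n, hn⟩) := by
      rw [List.getElem?_eq_getElem hn]; simp [List.get_eq_getElem]
    have hn1 : n < ([s₁] : List σ.Srt).length := by rw [← hsrc]; exact hn
    have hn0 : n = 0 := by simpa using hn1
    have h2 : (σ.src g)[n]? = some s₁ := by rw [hsrc, hn0]; rfl
    rw [h1] at h2
    exact (Option.some_injective _ h2).symm) t₁)

@[simp] lemma build1_L_nil {s s₁ : σ.Srt} (g : σ.Gen) (hg : σ.tgt g = s)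
    (hsrc : σ.src g = [s₁]) (t₁ : σ.Tree s₁) : (build1 g hg hsrc t₁).L [] = some g := rfl

lemma build1_L_cons {s s₁ : σ.Srt} (g : σ.Gen) (hg : σ.tgt g = s)
    (hsrc : σ.src g = [s₁]) (t₁ : σ.Tree s₁) (i : ℕ) (q : List ℕ) :
    (build1 g hg hsrc t₁).L (i :: q) = if i = 0 then t₁.L q else none := by
  rw [build1, buildC_L_cons]
  by_cases hi : i = 0
  · subst hi
    rw [dif_pos (by rw [hsrc]; simp), if_pos rfl]
    rfl
  · rw [dif_neg (by rw [hsrc]; simpa using hi), if_neg hi]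

lemma build1_not_finite {s s₁ : σ.Srt} (g : σ.Gen) (hg : σ.tgt g = s)
    (hsrc : σ.src g = [s₁]) (t₁ : σ.Tree s₁) (h : ¬ t₁.IsFinite) :
    ¬ (build1 g hg hsrc t₁).IsFinite :=
  buildC_not_finite g hg _ ⟨0, by rw [hsrc]; simp⟩ (fun hf => h hf)


lemma Tree.isFinite_congr {s s' : σ.Srt} {t : σ.Tree s} {u : σ.Tree s'} (h : t.L = u.L) :
    t.IsFinite ↔ u.IsFinite := by
  rw [Tree.IsFinite, Tree.IsFinite, h]

lemma src_get_eq {g : σ.Gen} {s₁ : σ.Srt} (hsrc : σ.src g = [s₁])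
    (i : Fin (σ.src g).length) : s₁ = (σ.src g).get i := by
  obtain ⟨n, hn⟩ := i
  have h1 : (σ.src g)[n]? = some ((σ.src g).get ⟨n, hn⟩) := by
    rw [List.getElem?_eq_getElem hn]; simp [List.get_eq_getElem]
  have hn1 : n < ([s₁] : List σ.Srt).length := by rw [← hsrc]; exact hn
  have hn0 : n = 0 := by simpa using hn1
  have h2 : (σ.src g)[n]? = some s₁ := by rw [hsrc, hn0]; rfl
  rw [h1] at h2
  exact (Option.some_injective _ h2).symm

/-- The unique immediate subtree at position 0 of a tree whose root is a unary generator. -/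
def child0 {s s₁ : σ.Srt} (t : σ.Tree s) {g : σ.Gen} (hg : t.L [] = some g)
    (hsrc : σ.src g = [s₁]) : σ.Tree s₁ :=
  Tree.castS (src_get_eq hsrc ⟨0, by rw [hsrc]; simp⟩).symm
    (t.child hg ⟨0, by rw [hsrc]; simp⟩)

@[simp] lemma child0_L {s s₁ : σ.Srt} (t : σ.Tree s) {g : σ.Gen} (hg : t.L [] = some g)
    (hsrc : σ.src g = [s₁]) (q : List ℕ) : (child0 t hg hsrc).L q = t.L (0 :: q) := rfl

lemma child0_not_finite {s s₁ : σ.Srt} {t : σ.Tree s} {g : σ.Gen} (hg : t.L [] = some g)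
    (hsrc : σ.src g = [s₁]) (ht : ¬ t.IsFinite) : ¬ (child0 t hg hsrc).IsFinite := by
  obtain ⟨i, hi⟩ := t.exists_infinite_child hg ht
  have hlen : (σ.src g).length = 1 := by rw [hsrc]; rfl
  have hlt := i.isLt
  have h0 : i.val = 0 := by omega
  intro hfin
  apply hi
  have hiff : (t.child hg i).IsFinite ↔ (child0 t hg hsrc).IsFinite :=
    Tree.isFinite_congr (funext fun q => by rw [Tree.child_L, h0]; rfl)
  exact hiff.mpr hfin

lemma L_cons_ne_zero {s s₁ : σ.Srt} {t : σ.Tree s} {g : σ.Gen} (hg : t.L [] = some g)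
    (hsrc : σ.src g = [s₁]) {i : ℕ} (hi : i ≠ 0) (q : List ℕ) : t.L (i :: q) = none := by
  have hlen : (σ.src g).length = 1 := by rw [hsrc]; rfl
  have h1 : t.L [i] = none := by
    rw [← Option.not_isSome_iff_eq_none]
    have h := t.isLab.2.1 [] g hg i
    simp only [List.nil_append] at h
    rw [h, hlen]
    omega
  have := none_append t.isLab h1 q
  simpa using this

lemma finite_of_S0I_args {s : σ.Srt} (t : σ.Tree s) {g' : σ.Gen} (hg : t.L [] = some g')
    (h : ∀ s' ∈ σ.src g', s' ∈ σ.S0I) : t.IsFinite :=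
  t.finite_of_children hg (fun i => h _ (List.get_mem _ _) (t.child hg i))

lemma root_eq_of_P {s : σ.Srt} {g : σ.Gen}
    (hoth : ∀ g' ∈ σ.Gens s, g' ≠ g → ∀ s' ∈ σ.src g', s' ∈ σ.S0I)
    {t : σ.Tree s} (ht : ¬ t.IsFinite) : t.L [] = some g := by
  obtain ⟨g'', hg'', htgt⟩ := t.root
  by_cases h : g'' = g
  · subst h; exact hg''
  · exact absurd (finite_of_S0I_args t hg'' (hoth g'' htgt h)) ht


lemma labels_eq (X : Set σ.Srt)
    (hfix : ∀ s ∈ X, ∃ g ∈ σ.Gens s, ∃ s₁, σ.src g = [s₁] ∧ s₁ ∈ X ∧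
      ∀ g' ∈ σ.Gens s, g' ≠ g → ∀ s' ∈ σ.src g', s' ∈ σ.S0I) :
    ∀ (p : List ℕ) (s), s ∈ X → ∀ t u : σ.Tree s, ¬ t.IsFinite → ¬ u.IsFinite →
      t.L p = u.L p := by
  intro p
  induction p with
  | nil =>
    intro s hs t u ht hu
    obtain ⟨g, hg, s₁, hsrc, hs₁, hoth⟩ := hfix s hs
    rw [root_eq_of_P hoth ht, root_eq_of_P hoth hu]
  | cons i q ih =>
    intro s hs t u ht hu
    obtain ⟨g, hg, s₁, hsrc, hs₁, hoth⟩ := hfix s hs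
    have hgt := root_eq_of_P hoth ht
    have hgu := root_eq_of_P hoth hu
    by_cases hi : i = 0
    · subst hi
      have h1 := ih s₁ hs₁ (child0 t hgt hsrc) (child0 u hgu hsrc)
        (child0_not_finite hgt hsrc ht) (child0_not_finite hgu hsrc hu)
      simpa using h1
    · rw [L_cons_ne_zero hgt hsrc hi q, L_cons_ne_zero hgu hsrc hi q]


end Sig


lemma S1I_subset_fOne (σ : Sig) (htwo : ∀ s : σ.Srt, (σ.Gens s).Nontrivial)
    (pk : σ.Srt → σ.Gen) (hpk : ∀ s, σ.tgt (pk s) = s) :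
    Sig.S1I σ ⊆ fOne σ (Sig.S1I σ) := by
  intro s hs
  obtain ⟨u, hu, huniq⟩ := hs
  obtain ⟨g, hgroot, hgtgt⟩ := u.root
  have hmem : s ∈ Sig.S1I σ := ⟨u, hu, huniq⟩
  have hoth : ∀ g' ∈ σ.Gens s, g' ≠ g → ∀ s' ∈ σ.src g', s' ∈ Sig.S0I σ := by
    intro g' hg' hne s' hs'
    by_contra hs0
    have hex : ∃ t' : σ.Tree s', ¬ t'.IsFinite := by
      simpa [Sig.S0I] using hs0
    obtain ⟨t', ht'⟩ := hex
    obtain ⟨i, hi⟩ := List.mem_iff_get.mp hs'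
    have hcast : s' = (σ.src g').get i := hi.symm
    set c : ∀ j : Fin (σ.src g').length, σ.Tree ((σ.src g').get j) :=
      fun j => if h : j = i then Sig.Tree.castS (by rw [h]; exact hcast.symm ▸ rfl) t'
        else Sig.canon pk hpk _ with hc
    have hciL : (c i).L = t'.L := by simp [hc]
    set v : σ.Tree s := Sig.buildC g' hg' c with hv
    have hvinf : ¬ v.IsFinite := Sig.buildC_not_finite g' hg' c i (by
      rw [Sig.Tree.isFinite_congr hciL]; exact ht')
    have he := huniq v hvinf
    have heL : v.L [] = u.L [] := by rw [he]
    change some g' = u.L [] at heL; rw [hgroot] at heL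
    exact hne (Option.some_injective _ heL)
  rcases hsg : σ.src g with _ | ⟨s₁, _ | ⟨s₂, rest2⟩⟩
  · -- nullary root: u would be finite
    exact absurd (u.finite_of_children hgroot (fun i => absurd i.isLt (by
      have h := congrArg List.length hsg; simp only [List.length_nil] at h; omega))) hu
  · -- unary root
    refine ⟨hmem, g, hgtgt, s₁, hsg, ?_, hoth⟩
    have hc0 : ¬ (Sig.child0 u hgroot hsg).IsFinite := Sig.child0_not_finite hgroot hsg hu
    refine ⟨Sig.child0 u hgroot hsg, hc0, ?_⟩
    intro t₁ ht₁
    have hvinf := Sig.build1_not_finite g hgtgt hsg t₁ ht₁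
    have he := huniq _ hvinf
    apply Sig.Tree.ext'
    funext q
    have hq : (Sig.build1 g hgtgt hsg t₁).L (0 :: q) = u.L (0 :: q) := by rw [he]
    rw [Sig.build1_L_cons, if_pos rfl] at hq
    rw [hq]; rfl
  · -- arity ≥ 2: contradiction
    exfalso
    have hlen2 : (σ.src g).length = rest2.length + 2 := by rw [hsg]; simp
    obtain ⟨i, hi⟩ := u.exists_infinite_child hgroot hu
    set w := u.child hgroot i with hw
    set jv := if i.val = 0 then 1 else 0 with hjv
    have hjlt : jv < (σ.src g).length := by rw [hjv]; split <;> omega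
    have hjne : jv ≠ i.val := by rw [hjv]; split <;> omega
    set j : Fin (σ.src g).length := ⟨jv, hjlt⟩ with hj
    have hji : j ≠ i := fun h => hjne (congrArg Fin.val h)
    obtain ⟨g₁, hg₁, g₂, hg₂, hgne⟩ := htwo ((σ.src g).get j)
    set w₁ : σ.Tree ((σ.src g).get j) := Sig.buildC g₁ hg₁ (fun k => Sig.canon pk hpk _) with hw₁
    set w₂ : σ.Tree ((σ.src g).get j) := Sig.buildC g₂ hg₂ (fun k => Sig.canon pk hpk _) with hw₂
    set c : σ.Tree ((σ.src g).get j) → ∀ k : Fin (σ.src g).length, σ.Tree ((σ.src g).get k) :=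
      fun wj k => if h : k = i then Sig.Tree.castS (by rw [h]) w
        else if h' : k = j then Sig.Tree.castS (by rw [h']) wj
        else Sig.canon pk hpk _ with hc
    have hcw : ∀ wj, ((c wj) i).L = w.L := by intro wj; simp [hc]
    have hcj : ∀ wj, ((c wj) j).L = wj.L := by intro wj; simp [hc, hji]
    have inf₁ : ¬ (Sig.buildC g hgtgt (c w₁)).IsFinite :=
      Sig.buildC_not_finite _ _ _ i (by rw [Sig.Tree.isFinite_congr (hcw w₁)]; exact hi)
    have inf₂ : ¬ (Sig.buildC g hgtgt (c w₂)).IsFinite :=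
      Sig.buildC_not_finite _ _ _ i (by rw [Sig.Tree.isFinite_congr (hcw w₂)]; exact hi)
    have e₁ := huniq _ inf₁
    have e₂ := huniq _ inf₂
    have heq : (Sig.buildC g hgtgt (c w₁)).L [jv] = (Sig.buildC g hgtgt (c w₂)).L [jv] := by
      rw [e₁, e₂]
    have hcomp : ∀ wj : σ.Tree ((σ.src g).get j),
        (Sig.buildC g hgtgt (c wj)).L [jv] = wj.L [] := by
      intro wj
      rw [show ([jv] : List ℕ) = jv :: [] from rfl, Sig.buildC_L_cons, dif_pos hjlt]
      exact congrFun (hcj wj) []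
    rw [hcomp w₁, hcomp w₂] at heq
    change some g₁ = some g₂ at heq
    exact hgne (Option.some_injective _ heq)

/-- Assuming every sort has at least two generators, `S_1I`
(the sorts with exactly one infinite tree) is the greatest fixed point of `f` on
`P(S \ S_0I)`, obtained as the intersection of the finite iterations of `f` on
`S \ S_0I`; moreover, for each `s ∈ S_1I` the unique infinite tree of sort `s` is
`g(u_{s₁})` where `g : s₁ → s` is the unique unary generator of `s` with `s₁ ∈ S_1I`
and `u_{s₁}` is the unique infinite tree of sort `s₁`. -/
theorem S1I_gfp (σ : Sig) (htwo : ∀ s : σ.Srt, (σ.Gens s).Nontrivial) :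
    Monotone (fOne σ) ∧
    fOne σ (Sig.S1I σ) = Sig.S1I σ ∧
    (∀ X : Set σ.Srt, X ⊆ (Sig.S0I σ)ᶜ → fOne σ X = X → X ⊆ Sig.S1I σ) ∧
    Sig.S1I σ = ⋂ d : ℕ, (fOne σ)^[d + 1] (Sig.S0I σ)ᶜ ∧
    ∀ s ∈ Sig.S1I σ, ∃ g ∈ σ.Gens s, ∃ s₁ : σ.Srt, σ.src g = [s₁] ∧ s₁ ∈ Sig.S1I σ ∧
      (∀ g' ∈ σ.Gens s, (∃ s₁' : σ.Srt, σ.src g' = [s₁'] ∧ s₁' ∈ Sig.S1I σ) → g' = g) ∧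
      ∀ (t : σ.Tree s) (t₁ : σ.Tree s₁), ¬ t.IsFinite → ¬ t₁.IsFinite →
        (t.L [] = some g ∧ ∀ (i : ℕ) (q : List ℕ),
          t.L (i :: q) = if i = 0 then t₁.L q else none) := by
  classical
  obtain ⟨pk, hpk⟩ : ∃ pk : σ.Srt → σ.Gen, ∀ s, σ.tgt (pk s) = s :=
    ⟨fun s => (htwo s).nonempty.choose, fun s => (htwo s).nonempty.choose_spec⟩
  have hmono : Monotone (fOne σ) := by
    intro X Y hXY s hs
    obtain ⟨h1, g, hg, s₁, h3, h4, h5⟩ := hs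
    exact ⟨hXY h1, g, hg, s₁, h3, hXY h4, h5⟩
  have hsub : ∀ X : Set σ.Srt, fOne σ X ⊆ X := fun X s hs => hs.1
  have hfixS1I : fOne σ (Sig.S1I σ) = Sig.S1I σ :=
    Set.Subset.antisymm (hsub _) (S1I_subset_fOne σ htwo pk hpk)
  have hgfp : ∀ X : Set σ.Srt, X ⊆ (Sig.S0I σ)ᶜ → fOne σ X = X → X ⊆ Sig.S1I σ := by
    intro X hX0 hfix s hs
    have hfixP : ∀ s' ∈ X, ∃ g ∈ σ.Gens s', ∃ s₁, σ.src g = [s₁] ∧ s₁ ∈ X ∧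
        ∀ g' ∈ σ.Gens s', g' ≠ g → ∀ s'' ∈ σ.src g', s'' ∈ Sig.S0I σ :=
      fun s' hs' => (show s' ∈ fOne σ X from hfix.symm ▸ hs').2
    have hs0 : s ∉ Sig.S0I σ := hX0 hs
    have hex : ∃ t : σ.Tree s, ¬ t.IsFinite := by simpa [Sig.S0I] using hs0
    obtain ⟨t, ht⟩ := hex
    exact ⟨t, ht, fun u hu =>
      Sig.Tree.ext' (funext fun p => Sig.labels_eq X hfixP p s hs u t hu ht)⟩
  have hS1I0 : Sig.S1I σ ⊆ (Sig.S0I σ)ᶜ := by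
    intro s hs
    obtain ⟨t, ht, -⟩ := hs
    intro hs0
    exact ht (hs0 t)
  have hiter : ∀ (d : ℕ) (X : Set σ.Srt), (fOne σ)^[d] X ⊆ X := by
    intro d
    induction d with
    | zero => exact fun X => subset_rfl
    | succ n ih =>
      intro X
      rw [Function.iterate_succ_apply]
      exact (ih (fOne σ X)).trans (hsub X)
  have hinter : Sig.S1I σ = ⋂ d : ℕ, (fOne σ)^[d + 1] (Sig.S0I σ)ᶜ := by
    apply Set.Subset.antisymm
    · refine Set.subset_iInter fun d => ?_
      induction d with
      | zero =>
        rw [Function.iterate_one]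
        nth_rewrite 1 [← hfixS1I]
        exact hmono hS1I0
      | succ n ih =>
        rw [Function.iterate_succ_apply']
        nth_rewrite 1 [← hfixS1I]
        exact hmono ih
    · set Y := ⋂ d : ℕ, (fOne σ)^[d + 1] (Sig.S0I σ)ᶜ with hY
      have hY0 : Y ⊆ (Sig.S0I σ)ᶜ :=
        (Set.iInter_subset _ 0).trans (hiter 1 (Sig.S0I σ)ᶜ)
      have hYfix : fOne σ Y = Y := by
        apply Set.Subset.antisymm (hsub Y)
        intro s hs
        have hstage : ∀ d : ℕ, s ∈ fOne σ ((fOne σ)^[d + 1] (Sig.S0I σ)ᶜ) := by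
          intro d
          have h := Set.mem_iInter.mp hs (d + 1)
          rwa [Function.iterate_succ_apply'] at h
        obtain ⟨hs0', g, hg, s₁, hsrc, hs₁0, hoth⟩ := hstage 0
        have hgen : ∀ d : ℕ, s₁ ∈ (fOne σ)^[d + 1] (Sig.S0I σ)ᶜ := by
          intro d
          obtain ⟨hsd, g', hg', s₁', hsrc', hs₁', hoth'⟩ := hstage d
          have hgg : g' = g := by
            by_contra hne
            have h1 : s₁' ∈ Sig.S0I σ :=
              hoth g' hg' hne s₁' (by rw [hsrc']; exact List.mem_singleton_self _)
            exact (hiter (d + 1) (Sig.S0I σ)ᶜ hs₁') h1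
          subst hgg
          rw [hsrc] at hsrc'
          injection hsrc' with h1 _
          rw [h1]; exact hs₁'
        exact ⟨hs, g, hg, s₁, hsrc, Set.mem_iInter.mpr hgen, hoth⟩
      exact hgfp Y hY0 hYfix
  refine ⟨hmono, hfixS1I, hgfp, hinter, ?_⟩
  intro s hs
  have hsf : s ∈ fOne σ (Sig.S1I σ) := hfixS1I.symm ▸ hs
  obtain ⟨-, g, hg, s₁, hsrc, hs₁, hoth⟩ := hsf
  refine ⟨g, hg, s₁, hsrc, hs₁, ?_, ?_⟩
  · intro g' hg' hx
    obtain ⟨s₁', hsrc', hs₁'⟩ := hx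
    by_contra hne
    have h0 : s₁' ∈ Sig.S0I σ :=
      hoth g' hg' hne s₁' (by rw [hsrc']; exact List.mem_singleton_self _)
    obtain ⟨t', ht', -⟩ := hs₁'
    exact ht' (h0 t')
  · intro t t₁ ht ht₁
    have hroot := Sig.root_eq_of_P hoth ht
    refine ⟨hroot, ?_⟩
    intro i q
    by_cases hi : i = 0
    · subst hi
      rw [if_pos rfl]
      obtain ⟨w, hw, hwu⟩ := hs₁
      have e1 := hwu _ (Sig.child0_not_finite hroot hsrc ht)
      have e2 := hwu t₁ ht₁
      have e3 : Sig.child0 t hroot hsrc = t₁ := e1.trans e2.symm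
      have e4 := congrFun (congrArg Sig.Tree.L e3) q
      simpa using e4
    · rw [if_neg hi]
      exact Sig.L_cons_ne_zero hroot hsrc hi q
end

section
/- Assume every sort has at least two generators. Let S_FI ⊆ S be the set of sorts with only finitely many infinite trees, S_0I the set of sorts with no infinite trees, S_1I the set of sorts with exactly one infinite tree, and S_FF the set of sorts with only finitely many finite trees. For each sort s, let F_s^{infin} = { f : s₁ × ⋯ × sₙ → s ∈ F_s | some sᵢ ∉ S_0I } (the generators that can build infinite trees). Define f : P(S) → P(S) by f(X) = X ∪ S_0I ∪ S_1I ∪ { s ∈ S | F_s^{infin} is finite, and every generator g : s₁ × ⋯ × sₙ → s in F_s satisfies: for all i ∈ {1,…,n}, either sᵢ ∈ S_0I, or (sᵢ ∈ X and sⱼ ∈ S_FF ∩ X for all j ≠ i) }. Then f is monotone and S_FI is the least fixed point of f. -/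
set_option linter.unusedVariables false


/-- The generators of sort `s` that can build infinite trees (some argument sort
has an infinite tree). -/
def FinfinI (σ : Sig) (s : σ.Srt) : Set σ.Gen :=
  { g | g ∈ σ.Gens s ∧ ∃ s' ∈ σ.src g, s' ∉ Sig.S0I σ }

/-- The operator `f` whose least fixed point is the set of sorts with only
finitely many infinite trees. -/
def fFI (σ : Sig) (X : Set σ.Srt) : Set σ.Srt :=
  X ∪ Sig.S0I σ ∪ Sig.S1I σ ∪
    { s | (FinfinI σ s).Finite ∧
      ∀ g ∈ σ.Gens s, ∀ (i : ℕ) (si : σ.Srt), (σ.src g)[i]? = some si →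
        (si ∈ Sig.S0I σ ∨ (si ∈ X ∧ ∀ (j : ℕ) (sj : σ.Srt), j ≠ i →
            (σ.src g)[j]? = some sj → sj ∈ Sig.SFF σ ∩ X)) }


/-! ### Auxiliary machinery for the proof of `SFI_lfp` -/

namespace SFIAux
open Sig
variable {σ : Sig}

/-- The set of infinite trees of sort `s`. -/
def infS (s : σ.Srt) : Set (σ.Tree s) := { t | ¬ t.IsFinite }

theorem mem_SFI_iff {s : σ.Srt} : s ∈ Sig.SFI σ ↔ (infS s).Finite := Iff.rfl

theorem not_mem_S0I_iff {s : σ.Srt} :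
    s ∉ Sig.S0I σ ↔ ∃ t : σ.Tree s, ¬ t.IsFinite := by
  simp [Sig.S0I]

theorem tree_ext {s : σ.Srt} {t t' : σ.Tree s} (h : t.L = t'.L) : t = t' := by
  cases t; cases t'; cases h; rfl

theorem L_none_append {s : σ.Srt} (t : σ.Tree s) {p : List ℕ} (hp : t.L p = none)
    (q : List ℕ) : t.L (p ++ q) = none := by
  induction q generalizing p with
  | nil => simpa using hp
  | cons a q ih =>
    have h1 : t.L (p ++ [a]) = none := t.isLab.1 p hp a
    have : p ++ a :: q = (p ++ [a]) ++ q := by simp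
    rw [this]
    exact ih h1

theorem L_cons_none {s : σ.Srt} (t : σ.Tree s) {g : σ.Gen} (h : t.L [] = some g)
    {i : ℕ} (hi : ¬ i < (σ.src g).length) (q : List ℕ) : t.L (i :: q) = none := by
  have h2 := t.isLab.2.1 [] g h i
  simp only [List.nil_append] at h2
  have : t.L [i] = none := by
    cases hL : t.L [i] with
    | none => rfl
    | some g' => exact absurd (h2.mp (by simp [hL])) hi
  have := L_none_append t this q
  simpa using this

theorem tree_ext_children {s : σ.Srt} {t t' : σ.Tree s} {g : σ.Gen}
    (h : t.L [] = some g) (h' : t'.L [] = some g)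
    (hc : ∀ i, i < (σ.src g).length → ∀ p, t.L (i :: p) = t'.L (i :: p)) : t = t' := by
  apply tree_ext
  funext p
  cases p with
  | nil => rw [h, h']
  | cons i q =>
    by_cases hi : i < (σ.src g).length
    · exact hc i hi q
    · rw [L_cons_none t h hi q, L_cons_none t' h' hi q]

/-- The immediate subtree of `t` at position `i`, of sort `s'`. -/
def childAt {s : σ.Srt} (t : σ.Tree s) {g : σ.Gen} (h : t.L [] = some g)
    (i : ℕ) {s' : σ.Srt} (hs' : (σ.src g)[i]? = some s') : σ.Tree s' where
  L := fun p => t.L (i :: p)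
  isLab := by
    refine ⟨?_, ?_, ?_⟩
    · intro p hp k
      have := t.isLab.1 (i :: p) hp k
      simpa using this
    · intro p g' hp k
      have := t.isLab.2.1 (i :: p) g' hp k
      simpa using this
    · intro p g' k g'' hp hpk
      exact t.isLab.2.2 (i :: p) g' k g'' hp (by simpa using hpk)
  root := by
    have hi : i < (σ.src g).length := (List.getElem?_eq_some_iff.mp hs').1
    have h2 := t.isLab.2.1 [] g h i
    simp only [List.nil_append] at h2
    rcases Option.isSome_iff_exists.mp (h2.mpr hi) with ⟨g', hg'⟩
    have h3 := t.isLab.2.2 [] g i g' h (by simpa using hg')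
    rw [hs'] at h3
    exact ⟨g', hg', (Option.some_inj.mp h3).symm⟩

theorem childAt_L {s : σ.Srt} (t : σ.Tree s) {g : σ.Gen} (h : t.L [] = some g)
    (i : ℕ) {s' : σ.Srt} (hs' : (σ.src g)[i]? = some s') (p : List ℕ) :
    (childAt t h i hs').L p = t.L (i :: p) := rfl

/-- Build a tree of sort `s` from a generator with target `s`. -/
def buildS {s : σ.Srt} (g : σ.Gen) (hg : σ.tgt g = s)
    (c : ∀ i : Fin (σ.src g).length, σ.Tree ((σ.src g).get i)) : σ.Tree s :=
  ⟨(σ.build g c).L, (σ.build g c).isLab, g, rfl, hg⟩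

theorem buildS_L_nil {s : σ.Srt} (g : σ.Gen) (hg : σ.tgt g = s) (c) :
    (buildS g hg c).L [] = some g := rfl

theorem buildS_L_cons {s : σ.Srt} (g : σ.Gen) (hg : σ.tgt g = s) (c)
    (i : ℕ) (q : List ℕ) :
    (buildS g hg c).L (i :: q) =
      if h : i < (σ.src g).length then (c ⟨i, h⟩).L q else none := rfl

theorem buildS_L_at {s : σ.Srt} (g : σ.Gen) (hg : σ.tgt g = s) (c)
    (i : Fin (σ.src g).length) (q : List ℕ) :
    (buildS g hg c).L ((i : ℕ) :: q) = (c i).L q := by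
  rw [buildS_L_cons, dif_pos i.isLt, Fin.eta]

theorem finite_congr {s s' : σ.Srt} {t : σ.Tree s} {t' : σ.Tree s'}
    (h : t.L = t'.L) : t.IsFinite ↔ t'.IsFinite := by
  unfold Tree.IsFinite
  rw [h]

theorem buildS_finite_iff {s : σ.Srt} (g : σ.Gen) (hg : σ.tgt g = s) (c) :
    (buildS g hg c).IsFinite ↔ ∀ i, (c i).IsFinite := by
  constructor
  · intro hfin i
    have himg : (fun p => (i : ℕ) :: p) '' { p | ((c i).L p).isSome }
        ⊆ { p | ((buildS g hg c).L p).isSome } := by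
      rintro _ ⟨p, hp, rfl⟩
      simp only [Set.mem_setOf_eq, buildS_L_at] at *
      exact hp
    exact (hfin.subset himg).of_finite_image
      (Function.Injective.injOn fun a b => by simp)
  · intro hall
    have hsub : { p | ((buildS g hg c).L p).isSome } ⊆
        {([] : List ℕ)} ∪ ⋃ i : Fin (σ.src g).length,
          (fun p => (i : ℕ) :: p) '' { p | ((c i).L p).isSome } := by
      intro p hp
      cases p with
      | nil => exact Or.inl rfl
      | cons j q =>
        simp only [Set.mem_setOf_eq, buildS_L_cons] at hp
        by_cases hj : j < (σ.src g).length
        · rw [dif_pos hj] at hp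
          exact Or.inr (Set.mem_iUnion.mpr ⟨⟨j, hj⟩, ⟨q, hp, rfl⟩⟩)
        · rw [dif_neg hj] at hp; simp at hp
    exact (Set.Finite.union (Set.finite_singleton _)
      (Set.finite_iUnion fun i => (hall i).image _)).subset hsub

theorem buildS_infinite {s : σ.Srt} (g : σ.Gen) (hg : σ.tgt g = s) (c)
    (i : Fin (σ.src g).length) (hi : ¬ (c i).IsFinite) :
    ¬ (buildS g hg c).IsFinite := fun h => hi ((buildS_finite_iff g hg c).mp h i)

theorem buildS_injOn {s : σ.Srt} (g : σ.Gen) (hg : σ.tgt g = s)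
    (b : ∀ i : Fin (σ.src g).length, σ.Tree ((σ.src g).get i))
    (i0 : Fin (σ.src g).length) (A : Set (σ.Tree ((σ.src g).get i0))) :
    Set.InjOn (fun u => buildS g hg (Function.update b i0 u)) A := by
  intro u _ u' _ heq
  apply tree_ext
  funext p
  have h1 := congrArg Tree.L heq
  have h2 := congrFun h1 ((i0 : ℕ) :: p)
  simpa only [buildS_L_at, Function.update_self] using h2

noncomputable def pickG (hne : ∀ s : σ.Srt, (σ.Gens s).Nonempty) (s : σ.Srt) : σ.Gen :=
  (hne s).choose

theorem pickG_tgt (hne : ∀ s : σ.Srt, (σ.Gens s).Nonempty) (s : σ.Srt) :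
    σ.tgt (pickG hne s) = s := (hne s).choose_spec

noncomputable def canonL (hne : ∀ s : σ.Srt, (σ.Gens s).Nonempty) :
    List ℕ → σ.Srt → Option σ.Gen
  | [], s => some (pickG hne s)
  | i :: p, s =>
      if h : i < (σ.src (pickG hne s)).length then
        canonL hne p ((σ.src (pickG hne s)).get ⟨i, h⟩)
      else none

theorem canonL_isSome (hne : ∀ s : σ.Srt, (σ.Gens s).Nonempty) (p : List ℕ)
    (s : σ.Srt) {g : σ.Gen} (h : canonL hne p s = some g) (i : ℕ) :
    (canonL hne (p ++ [i]) s).isSome ↔ i < (σ.src g).length := by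
  induction p generalizing s with
  | nil =>
    simp only [canonL] at h
    cases h
    simp only [List.nil_append, canonL]
    by_cases hi : i < (σ.src (pickG hne s)).length
    · simp [dif_pos hi, canonL, hi]
    · simp [dif_neg hi, hi]
  | cons a q ih =>
    simp only [canonL] at h
    by_cases ha : a < (σ.src (pickG hne s)).length
    · rw [dif_pos ha] at h
      simp only [List.cons_append, canonL, dif_pos ha]
      exact ih _ h
    · rw [dif_neg ha] at h; exact absurd h (by simp)

theorem canonL_none (hne : ∀ s : σ.Srt, (σ.Gens s).Nonempty) (p : List ℕ)
    (s : σ.Srt) (h : canonL hne p s = none) (i : ℕ) :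
    canonL hne (p ++ [i]) s = none := by
  induction p generalizing s with
  | nil => simp [canonL] at h
  | cons a q ih =>
    simp only [canonL] at h
    by_cases ha : a < (σ.src (pickG hne s)).length
    · rw [dif_pos ha] at h
      simp only [List.cons_append, canonL, dif_pos ha]
      exact ih _ h
    · simp only [List.cons_append, canonL, dif_neg ha]

theorem canonL_sort (hne : ∀ s : σ.Srt, (σ.Gens s).Nonempty) (p : List ℕ)
    (s : σ.Srt) {g g' : σ.Gen} (h : canonL hne p s = some g)
    {i : ℕ} (h' : canonL hne (p ++ [i]) s = some g') :
    (σ.src g)[i]? = some (σ.tgt g') := by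
  induction p generalizing s with
  | nil =>
    simp only [canonL] at h
    cases h
    simp only [List.nil_append, canonL] at h'
    by_cases hi : i < (σ.src (pickG hne s)).length
    · rw [dif_pos hi] at h'
      cases h'
      rw [List.getElem?_eq_getElem hi, pickG_tgt]
      rfl
    · rw [dif_neg hi] at h'; exact absurd h' (by simp)
  | cons a q ih =>
    simp only [canonL] at h
    by_cases ha : a < (σ.src (pickG hne s)).length
    · rw [dif_pos ha] at h
      simp only [List.cons_append, canonL, dif_pos ha] at h'
      exact ih _ h h'
    · rw [dif_neg ha] at h; exact absurd h (by simp)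

/-- Every sort has a tree. -/
noncomputable def someTree (hne : ∀ s : σ.Srt, (σ.Gens s).Nonempty) (s : σ.Srt) :
    σ.Tree s where
  L := fun p => canonL hne p s
  isLab := ⟨fun p hp i => canonL_none hne p s hp i,
    fun p g hp i => canonL_isSome hne p s hp i,
    fun p g i g' hp hpi => canonL_sort hne p s hp hpi⟩
  root := ⟨pickG hne s, rfl, pickG_tgt hne s⟩

theorem gens_nonempty_of_two (htwo : ∀ s : σ.Srt, (σ.Gens s).Nontrivial) :
    ∀ s : σ.Srt, (σ.Gens s).Nonempty := fun s => (htwo s).nonempty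

/-- Two distinct trees of every sort. -/
theorem exists_two_trees (htwo : ∀ s : σ.Srt, (σ.Gens s).Nontrivial) (s : σ.Srt) :
    ∃ t u : σ.Tree s, t ≠ u := by
  have hne := gens_nonempty_of_two htwo
  obtain ⟨g1, hg1, g2, hg2, hgg⟩ := htwo s
  refine ⟨buildS g1 hg1 (fun i => someTree hne _),
    buildS g2 hg2 (fun i => someTree hne _), fun h => hgg ?_⟩
  have := congrFun (congrArg Tree.L h) []
  change some g1 = some g2 at this
  exact Option.some_inj.mp this

/-- The default tuple of children for a generator. -/
noncomputable def bse (hne : ∀ s : σ.Srt, (σ.Gens s).Nonempty) (g : σ.Gen) :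
    ∀ i : Fin (σ.src g).length, σ.Tree ((σ.src g).get i) :=
  fun i => someTree hne _

/-- Plugging infinite trees at position `i0` injects `infS (get i0)` into `infS s`. -/
theorem plug_le (hne : ∀ s : σ.Srt, (σ.Gens s).Nonempty) {s : σ.Srt}
    (hs : (infS s).Finite) {g : σ.Gen} (hg : σ.tgt g = s)
    (i0 : Fin (σ.src g).length)
    (b : ∀ i : Fin (σ.src g).length, σ.Tree ((σ.src g).get i)) :
    (infS ((σ.src g).get i0)).Finite ∧
      (infS ((σ.src g).get i0)).ncard ≤ (infS s).ncard := by
  set Φ := fun u => buildS g hg (Function.update b i0 u) with hΦ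
  have hmaps : Φ '' infS ((σ.src g).get i0) ⊆ infS s := by
    rintro _ ⟨u, hu, rfl⟩
    exact buildS_infinite g hg _ i0 (by rw [Function.update_self]; exact hu)
  have hinj := buildS_injOn g hg b i0 (infS ((σ.src g).get i0))
  constructor
  · exact ((hs.subset hmaps).of_finite_image hinj)
  · calc (infS ((σ.src g).get i0)).ncard
        = (Φ '' infS ((σ.src g).get i0)).ncard := (Set.ncard_image_of_injOn hinj).symm
      _ ≤ (infS s).ncard := Set.ncard_le_ncard hmaps hs

/-- With two distinct trees available at position `i0 ≠ j0`, plugging doubles. -/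
theorem plug_double_le (hne : ∀ s : σ.Srt, (σ.Gens s).Nonempty) {s : σ.Srt}
    (hs : (infS s).Finite) {g : σ.Gen} (hg : σ.tgt g = s)
    {i0 j0 : Fin (σ.src g).length} (hij : i0 ≠ j0)
    {u1 u2 : σ.Tree ((σ.src g).get i0)} (huu : u1 ≠ u2) :
    2 * (infS ((σ.src g).get j0)).ncard ≤ (infS s).ncard := by
  set b := bse hne g with hb
  set Φ1 := fun t => buildS g hg (Function.update (Function.update b i0 u1) j0 t) with hΦ1
  set Φ2 := fun t => buildS g hg (Function.update (Function.update b i0 u2) j0 t) with hΦ2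
  set J := infS ((σ.src g).get j0) with hJ
  have hmaps : ∀ (u : σ.Tree ((σ.src g).get i0)),
      (fun t => buildS g hg (Function.update (Function.update b i0 u) j0 t)) '' J
        ⊆ infS s := by
    rintro u _ ⟨t, ht, rfl⟩
    exact buildS_infinite g hg _ j0 (by rw [Function.update_self]; exact ht)
  have hinj1 := buildS_injOn g hg (Function.update b i0 u1) j0 J
  have hinj2 := buildS_injOn g hg (Function.update b i0 u2) j0 J
  have hdisj : Disjoint (Φ1 '' J) (Φ2 '' J) := by
    rw [Set.disjoint_left]
    rintro _ ⟨t, ht, rfl⟩ ⟨t', ht', heq⟩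
    apply huu
    apply tree_ext
    funext p
    have h2 := congrFun (congrArg Tree.L heq) ((i0 : ℕ) :: p)
    simpa only [hΦ1, hΦ2, buildS_L_at, Function.update_of_ne hij, Function.update_self] using h2.symm
  have hsub : Φ1 '' J ∪ Φ2 '' J ⊆ infS s :=
    Set.union_subset (hmaps u1) (hmaps u2)
  have hfin1 : (Φ1 '' J).Finite := hs.subset (hmaps u1)
  have hfin2 : (Φ2 '' J).Finite := hs.subset (hmaps u2)
  calc 2 * J.ncard = J.ncard + J.ncard := by ring
    _ = (Φ1 '' J).ncard + (Φ2 '' J).ncard := by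
        rw [Set.ncard_image_of_injOn hinj1, Set.ncard_image_of_injOn hinj2]
    _ = (Φ1 '' J ∪ Φ2 '' J).ncard := (Set.ncard_union_eq hdisj hfin1 hfin2).symm
    _ ≤ (infS s).ncard := Set.ncard_le_ncard hsub hs

theorem sib_SFF (hne : ∀ s : σ.Srt, (σ.Gens s).Nonempty) {s : σ.Srt}
    (hs : (infS s).Finite) {g : σ.Gen} (hg : σ.tgt g = s)
    {i0 j0 : Fin (σ.src g).length} (hij : i0 ≠ j0)
    {u : σ.Tree ((σ.src g).get i0)} (hu : ¬ u.IsFinite) :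
    (σ.src g).get j0 ∈ Sig.SFF σ := by
  set b := Function.update (bse hne g) i0 u with hb
  set Φ := fun t => buildS g hg (Function.update b j0 t) with hΦ
  set F := { t : σ.Tree ((σ.src g).get j0) | t.IsFinite } with hF
  have hmaps : Φ '' F ⊆ infS s := by
    rintro _ ⟨t, ht, rfl⟩
    refine buildS_infinite g hg _ i0 ?_
    rw [Function.update_of_ne hij, hb, Function.update_self]
    exact hu
  have hinj := buildS_injOn g hg b j0 F
  exact ((hs.subset hmaps).of_finite_image hinj)

theorem finite_of_children_finite {s : σ.Srt} {t : σ.Tree s} {g : σ.Gen}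
    (hroot : t.L [] = some g)
    (hall : ∀ i : Fin (σ.src g).length, {p | (t.L ((i : ℕ) :: p)).isSome}.Finite) :
    t.IsFinite := by
  have hsub : { p | (t.L p).isSome } ⊆
      {([] : List ℕ)} ∪ ⋃ i : Fin (σ.src g).length,
        (fun p => (i : ℕ) :: p) '' { p | (t.L ((i : ℕ) :: p)).isSome } := by
    intro p hp
    cases p with
    | nil => exact Or.inl rfl
    | cons j q =>
      by_cases hj : j < (σ.src g).length
      · exact Or.inr (Set.mem_iUnion.mpr ⟨⟨j, hj⟩, ⟨q, hp, rfl⟩⟩)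
      · rw [Set.mem_setOf_eq, L_cons_none t hroot hj q] at hp; simp at hp
  exact (Set.Finite.union (Set.finite_singleton _)
    (Set.finite_iUnion fun i => (hall i).image _)).subset hsub

theorem exists_inf_rooted (hne : ∀ s : σ.Srt, (σ.Gens s).Nonempty) {s : σ.Srt}
    {g : σ.Gen} (hmem : g ∈ FinfinI σ s) :
    ∃ t : σ.Tree s, ¬ t.IsFinite ∧ t.L [] = some g := by
  obtain ⟨hg, s', hs'mem, hs'0⟩ := hmem
  obtain ⟨i0, hget⟩ := List.mem_iff_get.mp hs'mem
  subst hget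
  obtain ⟨u, hu⟩ := not_mem_S0I_iff.mp hs'0
  refine ⟨buildS g hg (Function.update (bse hne g) i0 u), ?_, buildS_L_nil _ _ _⟩
  exact buildS_infinite g hg _ i0 (by rw [Function.update_self]; exact hu)

theorem Finfin_finite (hne : ∀ s : σ.Srt, (σ.Gens s).Nonempty) {s : σ.Srt}
    (hs : (infS s).Finite) : (FinfinI σ s).Finite := by
  classical
  set f : σ.Gen → σ.Tree s := fun g =>
    if h : ∃ t : σ.Tree s, ¬ t.IsFinite ∧ t.L [] = some g then h.choose
    else someTree hne s with hf
  have hroot : ∀ g ∈ FinfinI σ s, ¬ (f g).IsFinite ∧ (f g).L [] = some g := by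
    intro g hgmem
    have h : ∃ t : σ.Tree s, ¬ t.IsFinite ∧ t.L [] = some g :=
      exists_inf_rooted hne hgmem
    simp only [hf, dif_pos h]
    exact h.choose_spec
  have hmaps : f '' FinfinI σ s ⊆ infS s := by
    rintro _ ⟨g, hgmem, rfl⟩
    exact (hroot g hgmem).1
  have hinj : Set.InjOn f (FinfinI σ s) := by
    intro g hgmem g' hgmem' heq
    have h1 := (hroot g hgmem).2
    have h2 := (hroot g' hgmem').2
    rw [heq, h2] at h1
    exact (Option.some_inj.mp h1).symm
  exact ((hs.subset hmaps).of_finite_image hinj)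

theorem rooted_infinite_finite (hne : ∀ s : σ.Srt, (σ.Gens s).Nonempty)
    {s : σ.Srt} {g : σ.Gen} (hg : σ.tgt g = s)
    (hcond : ∀ (i : ℕ) (si : σ.Srt), (σ.src g)[i]? = some si →
      (si ∈ Sig.S0I σ ∨ (si ∈ Sig.SFI σ ∧ ∀ (j : ℕ) (sj : σ.Srt), j ≠ i →
        (σ.src g)[j]? = some sj → sj ∈ Sig.SFF σ ∩ Sig.SFI σ))) :
    { t : σ.Tree s | ¬ t.IsFinite ∧ t.L [] = some g }.Finite := by
  classical
  have hcover : { t : σ.Tree s | ¬ t.IsFinite ∧ t.L [] = some g } ⊆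
      ⋃ i0 : Fin (σ.src g).length, { t : σ.Tree s | t.L [] = some g ∧
        ¬ {p | (t.L ((i0 : ℕ) :: p)).isSome}.Finite } := by
    rintro t ⟨hinf, hroot⟩
    by_contra hnot
    simp only [Set.mem_iUnion, Set.mem_setOf_eq, not_exists, not_and, not_not] at hnot
    exact hinf (finite_of_children_finite hroot (fun i0 => hnot i0 hroot))
  refine Set.Finite.subset (Set.finite_iUnion (fun i0 => ?_)) hcover
  set C := { t : σ.Tree s | t.L [] = some g ∧
      ¬ {p | (t.L ((i0 : ℕ) :: p)).isSome}.Finite } with hC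
  rcases Set.eq_empty_or_nonempty C with hemp | ⟨t0, ht0⟩
  · rw [hemp]; exact Set.finite_empty
  -- the sort at position i0 admits an infinite tree
  have hsi? : (σ.src g)[i0.1]? = some ((σ.src g).get i0) := by
    rw [List.getElem?_eq_getElem i0.isLt]; rfl
  have hchild0 : ¬ (childAt t0 ht0.1 i0.1 hsi?).IsFinite := ht0.2
  have hnot0 : (σ.src g).get i0 ∉ Sig.S0I σ :=
    not_mem_S0I_iff.mpr ⟨_, hchild0⟩
  rcases hcond i0.1 _ hsi? with h0 | ⟨hSFIi, hsib⟩
  · exact absurd h0 hnot0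
  -- injection into a finite product
  set B : ∀ i : Fin (σ.src g).length, Set (σ.Tree ((σ.src g).get i)) :=
    fun i => if i = i0 then infS ((σ.src g).get i) else Set.univ with hB
  have hBfin : ∀ i, (B i).Finite := by
    intro i
    by_cases hii : i = i0
    · subst hii
      simp only [hB, if_pos rfl]
      exact hSFIi
    · simp only [hB, if_neg hii]
      have hi? : (σ.src g)[i.1]? = some ((σ.src g).get i) := by
        rw [List.getElem?_eq_getElem i.isLt]; rfl
      have hvv : i.1 ≠ i0.1 := fun h => hii (Fin.ext h)
      obtain ⟨hFF, hFI⟩ := hsib i.1 _ hvv hi?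
      have : (Set.univ : Set (σ.Tree ((σ.src g).get i))) ⊆
          { t | t.IsFinite } ∪ { t | ¬ t.IsFinite } := by
        intro t _
        exact (em t.IsFinite).imp id id
      exact (hFF.union hFI).subset this
  set f : σ.Tree s → (Fin (σ.src g).length → (List ℕ → Option σ.Gen)) :=
    fun t i p => t.L ((i : ℕ) :: p) with hf
  have himg : f '' C ⊆ Set.pi Set.univ
      (fun i => (fun u : σ.Tree ((σ.src g).get i) => u.L) '' B i) := by
    rintro _ ⟨t, ht, rfl⟩ i _
    have hi? : (σ.src g)[i.1]? = some ((σ.src g).get i) := by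
      rw [List.getElem?_eq_getElem i.isLt]; rfl
    refine ⟨childAt t ht.1 i.1 hi?, ?_, rfl⟩
    by_cases hii : i = i0
    · subst hii
      simp only [hB, if_pos rfl]
      exact ht.2
    · simp only [hB, if_neg hii]
      trivial
  have hinj : Set.InjOn f C := by
    intro t ht t' ht' heq
    refine tree_ext_children ht.1 ht'.1 (fun i hi p => ?_)
    exact congrFun (congrFun heq ⟨i, hi⟩) p
  exact Set.Finite.of_finite_image
    ((Set.Finite.pi (fun i => (hBfin i).image _)).subset himg) hinj

/-- Direction (C): every sort in `S_FI` satisfies the fourth condition with `X = S_FI`. -/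
theorem SFI_fourth (htwo : ∀ s : σ.Srt, (σ.Gens s).Nontrivial) {s : σ.Srt}
    (hs : s ∈ Sig.SFI σ) :
    (FinfinI σ s).Finite ∧
      ∀ g ∈ σ.Gens s, ∀ (i : ℕ) (si : σ.Srt), (σ.src g)[i]? = some si →
        (si ∈ Sig.S0I σ ∨ (si ∈ Sig.SFI σ ∧ ∀ (j : ℕ) (sj : σ.Srt), j ≠ i →
            (σ.src g)[j]? = some sj → sj ∈ Sig.SFF σ ∩ Sig.SFI σ)) := by
  have hne := gens_nonempty_of_two htwo
  refine ⟨Finfin_finite hne hs, ?_⟩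
  intro g hgmem i si hsi
  have hg : σ.tgt g = s := hgmem
  by_cases hS0 : si ∈ Sig.S0I σ
  · exact Or.inl hS0
  obtain ⟨hi, hival⟩ := List.getElem?_eq_some_iff.mp hsi
  have hget : (σ.src g).get ⟨i, hi⟩ = si := hival
  subst hget
  obtain ⟨u, hu⟩ := not_mem_S0I_iff.mp hS0
  refine Or.inr ⟨(plug_le hne hs hg ⟨i, hi⟩ (bse hne g)).1, ?_⟩
  intro j sj hji hsj
  obtain ⟨hj, hjval⟩ := List.getElem?_eq_some_iff.mp hsj
  have hgetj : (σ.src g).get ⟨j, hj⟩ = sj := hjval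
  subst hgetj
  have hij : (⟨i, hi⟩ : Fin (σ.src g).length) ≠ ⟨j, hj⟩ :=
    fun h => hji (congrArg Fin.val h).symm
  exact ⟨sib_SFF hne hs hg hij hu, (plug_le hne hs hg ⟨j, hj⟩ (bse hne g)).1⟩

/-- Direction (B): the fourth condition with `X = S_FI` implies membership in `S_FI`. -/
theorem fourth_sub_SFI (hne : ∀ s : σ.Srt, (σ.Gens s).Nonempty) {s : σ.Srt}
    (hFf : (FinfinI σ s).Finite)
    (hcond : ∀ g ∈ σ.Gens s, ∀ (i : ℕ) (si : σ.Srt), (σ.src g)[i]? = some si →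
        (si ∈ Sig.S0I σ ∨ (si ∈ Sig.SFI σ ∧ ∀ (j : ℕ) (sj : σ.Srt), j ≠ i →
            (σ.src g)[j]? = some sj → sj ∈ Sig.SFF σ ∩ Sig.SFI σ))) :
    s ∈ Sig.SFI σ := by
  have hcover : infS s ⊆ ⋃ g ∈ FinfinI σ s,
      { t : σ.Tree s | ¬ t.IsFinite ∧ t.L [] = some g } := by
    intro t ht
    obtain ⟨g, hroot, hg⟩ := t.root
    refine Set.mem_biUnion ?_ ⟨ht, hroot⟩
    refine ⟨hg, ?_⟩
    by_contra hno
    push_neg at hno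
    apply ht
    apply finite_of_children_finite hroot
    intro i0
    have hi? : (σ.src g)[i0.1]? = some ((σ.src g).get i0) := by
      rw [List.getElem?_eq_getElem i0.isLt]; rfl
    have hmem : (σ.src g).get i0 ∈ σ.src g := by rw [List.get_eq_getElem]; exact List.getElem_mem i0.isLt
    have hS0 := hno _ hmem
    exact hS0 (childAt t hroot i0.1 hi?)
  refine Set.Finite.subset (Set.Finite.biUnion hFf (fun g hgmem => ?_)) hcover
  exact rooted_infinite_finite hne hgmem.1 (hcond g hgmem.1)

/-- The key step in the least-fixed-point argument: a minimal bad sort has a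
unary generator through which all its infinite trees factor, leading to another
minimal bad sort. -/
theorem step (htwo : ∀ s : σ.Srt, (σ.Gens s).Nontrivial) {X : Set σ.Srt}
    (hX : fFI σ X = X) {n0 : ℕ} (h2 : 2 ≤ n0)
    (hmin : ∀ s' : σ.Srt, s' ∈ Sig.SFI σ → s' ∉ X → n0 ≤ (infS s').ncard)
    {s : σ.Srt} (hs : s ∈ Sig.SFI σ) (hsX : s ∉ X) (hcard : (infS s).ncard = n0) :
    ∃ (g : σ.Gen) (s' : σ.Srt), σ.tgt g = s ∧ σ.src g = [s'] ∧
      s' ∈ Sig.SFI σ ∧ s' ∉ X ∧ (infS s').ncard = n0 ∧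
      ∀ t : σ.Tree s, ¬ t.IsFinite →
        t.L [] = some g ∧ ¬ {p | (t.L (0 :: p)).isSome}.Finite := by
  have hne := gens_nonempty_of_two htwo
  have hFf := Finfin_finite hne hs
  have hnot4 : s ∉ { s | (FinfinI σ s).Finite ∧
      ∀ g ∈ σ.Gens s, ∀ (i : ℕ) (si : σ.Srt), (σ.src g)[i]? = some si →
        (si ∈ Sig.S0I σ ∨ (si ∈ X ∧ ∀ (j : ℕ) (sj : σ.Srt), j ≠ i →
            (σ.src g)[j]? = some sj → sj ∈ Sig.SFF σ ∩ X)) } := by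
    intro h
    exact hsX (hX ▸ Or.inr h)
  have hnc : ¬ ∀ g ∈ σ.Gens s, ∀ (i : ℕ) (si : σ.Srt), (σ.src g)[i]? = some si →
      (si ∈ Sig.S0I σ ∨ (si ∈ X ∧ ∀ (j : ℕ) (sj : σ.Srt), j ≠ i →
          (σ.src g)[j]? = some sj → sj ∈ Sig.SFF σ ∩ X)) :=
    fun h => hnot4 ⟨hFf, h⟩
  push_neg at hnc
  obtain ⟨g, hgmem, i, si, hsi, hno⟩ := hnc
  obtain ⟨hno1, hno2⟩ := hno
  have hg : σ.tgt g = s := hgmem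
  obtain ⟨hi, hival⟩ := List.getElem?_eq_some_iff.mp hsi
  have hget : (σ.src g).get ⟨i, hi⟩ = si := hival
  subst hget
  obtain ⟨u, hu⟩ := not_mem_S0I_iff.mp hno1
  -- every sibling of position i is in SFF ∩ X
  have hsibX : ∀ (j : ℕ) (sj : σ.Srt), j ≠ i → (σ.src g)[j]? = some sj →
      sj ∈ Sig.SFF σ ∩ X := by
    intro j sj hji hsj
    obtain ⟨hj, hjval⟩ := List.getElem?_eq_some_iff.mp hsj
    have hgetj : (σ.src g).get ⟨j, hj⟩ = sj := hjval
    subst hgetj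
    have hij : (⟨i, hi⟩ : Fin (σ.src g).length) ≠ ⟨j, hj⟩ :=
      fun h => hji (congrArg Fin.val h).symm
    have hFFj := sib_SFF hne hs hg hij hu
    refine ⟨hFFj, ?_⟩
    by_contra hjX
    have hSFIj := (plug_le hne hs hg ⟨j, hj⟩ (bse hne g)).1
    have hminj := hmin _ hSFIj hjX
    obtain ⟨u1, u2, huu⟩ := exists_two_trees htwo ((σ.src g).get ⟨i, hi⟩)
    have hdl := plug_double_le hne hs hg hij huu
    rw [hcard] at hdl
    omega
  -- hence the sort at position i is not in X
  have hsiX : (σ.src g).get ⟨i, hi⟩ ∉ X := by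
    intro h
    obtain ⟨j, sj, hji, hsj, hns⟩ := hno2 h
    exact hns (hsibX j sj hji hsj)
  have hSFIi := (plug_le hne hs hg ⟨i, hi⟩ (bse hne g)).1
  have hle := (plug_le hne hs hg ⟨i, hi⟩ (bse hne g)).2
  rw [hcard] at hle
  have hcardi : (infS ((σ.src g).get ⟨i, hi⟩)).ncard = n0 :=
    le_antisymm hle (hmin _ hSFIi hsiX)
  -- the generator g is unary
  have hlen : (σ.src g).length = 1 := by
    by_contra hlen
    have hlen2 : 2 ≤ (σ.src g).length := by omega
    have hjlt : (if i = 0 then 1 else 0) < (σ.src g).length := by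
      split <;> omega
    set j : Fin (σ.src g).length := ⟨if i = 0 then 1 else 0, hjlt⟩ with hjdef
    have hij : j ≠ (⟨i, hi⟩ : Fin (σ.src g).length) := by
      intro h
      have := congrArg Fin.val h
      simp only [hjdef] at this
      split at this <;> omega
    obtain ⟨u1, u2, huu⟩ := exists_two_trees htwo ((σ.src g).get j)
    have hdl := plug_double_le hne hs hg hij huu
    rw [hcard, hcardi] at hdl
    omega
  have hi0 : i = 0 := by omega
  subst hi0
  set ipos : Fin (σ.src g).length := ⟨0, hi⟩ with hipos
  set s' := (σ.src g).get ipos with hs'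
  have hsrc : σ.src g = [s'] := by
    obtain ⟨a, ha⟩ := List.length_eq_one_iff.mp hlen
    have : s' = a := by simp [hs', ha]
    rw [this, ha]
  -- surjectivity of plugging onto the infinite trees of s
  set Φ := fun v => buildS g hg (Function.update (bse hne g) ipos v) with hΦ
  have hmaps : Φ '' infS s' ⊆ infS s := by
    rintro _ ⟨v, hv, rfl⟩
    exact buildS_infinite g hg _ ipos (by rw [Function.update_self]; exact hv)
  have hinj := buildS_injOn g hg (bse hne g) ipos (infS s')
  have himgcard : (Φ '' infS s').ncard = n0 := by
    rw [Set.ncard_image_of_injOn hinj, hcardi]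
  have himg : Φ '' infS s' = infS s := by
    refine Set.eq_of_subset_of_ncard_le hmaps ?_ hs
    rw [himgcard, hcard]
  refine ⟨g, s', hg, hsrc, hSFIi, hsiX, hcardi, ?_⟩
  intro t ht
  have : t ∈ Φ '' infS s' := himg ▸ ht
  obtain ⟨v, hv, rfl⟩ := this
  constructor
  · exact buildS_L_nil _ _ _
  · have hL : ∀ p, (Φ v).L (0 :: p) = v.L p := by
      intro p
      have h1 := buildS_L_at g hg (Function.update (bse hne g) ipos v) ipos p
      rw [Function.update_self] at h1
      exact h1
    intro hfin
    apply hv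
    show ({ p | (v.L p).isSome }).Finite
    have : { p | (v.L p).isSome } = { p | ((Φ v).L (0 :: p)).isSome } := by
      ext p
      rw [Set.mem_setOf_eq, Set.mem_setOf_eq, hL]
    rw [this]
    exact hfin

end SFIAux
/-- Assuming every sort has at least two generators, `f` is
monotone and `S_FI` (the sorts with only finitely many infinite trees) is its
least fixed point. -/
theorem SFI_lfp (σ : Sig) (htwo : ∀ s : σ.Srt, (σ.Gens s).Nontrivial) :
    Monotone (fFI σ) ∧
    fFI σ (Sig.SFI σ) = Sig.SFI σ ∧
    (∀ X : Set σ.Srt, fFI σ X = X → Sig.SFI σ ⊆ X) := by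
  classical
  open SFIAux in
  have hne := gens_nonempty_of_two htwo
  refine ⟨?_, ?_, ?_⟩
  · -- monotonicity
    intro X Y hXY s hmem
    simp only [fFI, Set.mem_union, Set.mem_setOf_eq] at hmem ⊢
    rcases hmem with ((h | h) | h) | h
    · exact Or.inl (Or.inl (Or.inl (hXY h)))
    · exact Or.inl (Or.inl (Or.inr h))
    · exact Or.inl (Or.inr h)
    · refine Or.inr ⟨h.1, ?_⟩
      intro g hgm i si hsi
      rcases h.2 g hgm i si hsi with h0 | ⟨hX1, hsib⟩
      · exact Or.inl h0
      · refine Or.inr ⟨hXY hX1, fun j sj hji hsj => ?_⟩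
        obtain ⟨hFF, hXX⟩ := hsib j sj hji hsj
        exact ⟨hFF, hXY hXX⟩
  · -- fixed point
    apply Set.Subset.antisymm
    · intro s hmem
      simp only [fFI, Set.mem_union, Set.mem_setOf_eq] at hmem
      rcases hmem with ((h | h) | h) | h
      · exact h
      · exact Set.Finite.subset Set.finite_empty (fun t ht => absurd (h t) ht)
      · obtain ⟨t0, ht0, huniq⟩ := h
        exact Set.Subsingleton.finite
          (fun a ha b hb => (huniq a ha).trans (huniq b hb).symm)
      · exact fourth_sub_SFI hne h.1 h.2
    · intro s h
      exact Or.inl (Or.inl (Or.inl h))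
  · -- least fixed point
    intro X hX s hsSFI
    by_contra hsX
    set N : Set ℕ := { n | ∃ s', (s' ∈ Sig.SFI σ ∧ s' ∉ X) ∧ (infS s').ncard = n }
      with hN
    have hNne : N.Nonempty := ⟨(infS s).ncard, s, ⟨hsSFI, hsX⟩, rfl⟩
    set n0 := sInf N with hn0
    obtain ⟨s0, ⟨hs0SFI, hs0X⟩, hs0card⟩ := Nat.sInf_mem hNne
    rw [← hn0] at hs0card
    have hmin : ∀ s', s' ∈ Sig.SFI σ → s' ∉ X → n0 ≤ (infS s').ncard :=
      fun s' h1 h2 => Nat.sInf_le ⟨s', ⟨h1, h2⟩, rfl⟩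
    have hS0IX : Sig.S0I σ ⊆ X := fun u hu => hX ▸ Or.inl (Or.inl (Or.inr hu))
    have hS1IX : Sig.S1I σ ⊆ X := fun u hu => hX ▸ Or.inl (Or.inr hu)
    have h2 : 2 ≤ n0 := by
      by_contra h2
      have h01 : n0 = 0 ∨ n0 = 1 := by omega
      rcases h01 with h0 | h1
      · rw [h0] at hs0card
        have hemp : infS s0 = ∅ := (Set.ncard_eq_zero hs0SFI).mp hs0card
        apply hs0X
        apply hS0IX
        intro t
        by_contra htf
        exact absurd (hemp ▸ htf : t ∈ (∅ : Set (σ.Tree s0))) (by simp)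
      · rw [h1] at hs0card
        obtain ⟨a, ha⟩ := Set.ncard_eq_one.mp hs0card
        apply hs0X
        apply hS1IX
        refine ⟨a, ?_, ?_⟩
        · show a ∈ infS s0
          rw [ha]; rfl
        · intro b hb
          have : b ∈ infS s0 := hb
          rw [ha] at this
          exact this
    -- the bad sorts with minimal count
    let T := { s'' : σ.Srt // s'' ∈ Sig.SFI σ ∧ s'' ∉ X ∧ (infS s'').ncard = n0 }
    have hstep : ∀ sp : T, ∃ (g : σ.Gen) (s' : σ.Srt),
        σ.tgt g = sp.1 ∧ σ.src g = [s'] ∧ s' ∈ Sig.SFI σ ∧ s' ∉ X ∧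
          (infS s').ncard = n0 ∧
          ∀ t : σ.Tree sp.1, ¬ t.IsFinite →
            t.L [] = some g ∧ ¬ {p | (t.L (0 :: p)).isSome}.Finite :=
      fun sp => step htwo hX h2 hmin sp.2.1 sp.2.2.1 sp.2.2.2
    let gf : T → σ.Gen := fun sp => (hstep sp).choose
    let nx : T → T := fun sp => ⟨(hstep sp).choose_spec.choose,
      (hstep sp).choose_spec.choose_spec.2.2.1,
      (hstep sp).choose_spec.choose_spec.2.2.2.1,
      (hstep sp).choose_spec.choose_spec.2.2.2.2.1⟩
    have hspec : ∀ sp : T, σ.tgt (gf sp) = sp.1 ∧ σ.src (gf sp) = [(nx sp).1] ∧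
        ∀ t : σ.Tree sp.1, ¬ t.IsFinite →
          t.L [] = some (gf sp) ∧ ¬ {p | (t.L (0 :: p)).isSome}.Finite :=
      fun sp => ⟨(hstep sp).choose_spec.choose_spec.1,
        (hstep sp).choose_spec.choose_spec.2.1,
        (hstep sp).choose_spec.choose_spec.2.2.2.2.2⟩
    -- every infinite tree of a bad sort is the unique "path" tree
    have hpath : ∀ (p : List ℕ) (sp : T) (t : σ.Tree sp.1), ¬ t.IsFinite →
        t.L p = if p = List.replicate p.length 0
          then some (gf (nx^[p.length] sp)) else none := by
      intro p
      induction p with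
      | nil =>
        intro sp t ht
        simp only [List.length_nil, List.replicate_zero, if_pos rfl,
          Function.iterate_zero, id_eq]
        exact ((hspec sp).2.2 t ht).1
      | cons a q ih =>
        intro sp t ht
        have hroot := ((hspec sp).2.2 t ht).1
        have hsrc := (hspec sp).2.1
        by_cases ha : a = 0
        · subst ha
          have hs0? : (σ.src (gf sp))[0]? = some ((nx sp).1) := by rw [hsrc]; rfl
          have hchinf : ¬ (childAt t hroot 0 hs0?).IsFinite :=
            ((hspec sp).2.2 t ht).2
          have hq := ih (nx sp) (childAt t hroot 0 hs0?) hchinf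
          have hLq : t.L (0 :: q) = (childAt t hroot 0 hs0?).L q := rfl
          rw [hLq, hq, ← Function.iterate_succ_apply]
          simp only [List.length_cons, List.replicate_succ]
          by_cases hq0 : q = List.replicate q.length 0
          · rw [if_pos hq0, if_pos (by rw [← hq0])]
          · rw [if_neg hq0, if_neg (fun hcontra => hq0 (List.cons.inj hcontra).2)]
        · have hnone : t.L (a :: q) = none := by
            apply L_cons_none t hroot _ q
            rw [hsrc]
            simp only [List.length_singleton]
            omega
          rw [hnone, if_neg]
          intro hcontra
          rw [List.length_cons, List.replicate_succ] at hcontra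
          injection hcontra with h1 _
          exact ha h1
    -- two distinct infinite trees of s0 give a contradiction
    have h1lt : 1 < (infS s0).ncard := by rw [hs0card]; omega
    obtain ⟨t1, ht1, t2, ht2, hne12⟩ := (Set.one_lt_ncard hs0SFI).mp h1lt
    apply hne12
    apply tree_ext
    funext p
    have e1 := hpath p ⟨s0, hs0SFI, hs0X, hs0card⟩ t1 ht1
    have e2 := hpath p ⟨s0, hs0SFI, hs0X, hs0card⟩ t2 ht2
    rw [e1, e2]
end

section
/- Every solved basic formula is satisfiable in the structure 𝒯 of trees. -/
set_option linter.unusedVariables false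


namespace Sig

variable (σ : Sig)

variable {σ}

variable (σ)

variable {σ}

variable (σ)

variable {σ}

variable (σ)

/-- A basic formula: a conjunction of equations `v = t` (with `t` a flat term)
and finiteness constraints `fin(u)`, represented by the list of equations
(a sort, the left-hand-side variable, the right-hand-side term) and the list of
`fin`-variables. -/
structure Basic where
  eqs : List ((s : σ.Srt) × ℕ × σ.Tm s)
  fins : List ((s : σ.Srt) × ℕ)

variable {σ}

/-- Well-formedness of a basic formula: all right-hand sides are flat. -/
def Basic.WF (β : σ.Basic) : Prop := ∀ e ∈ β.eqs, (e.2.2).IsFlat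

/-- Satisfaction of a basic formula under a valuation. -/
def Basic.Sat (β : σ.Basic) (ρ : σ.Val) : Prop :=
  (∀ e ∈ β.eqs, ρ e.1 e.2.1 = (e.2.2).eval ρ) ∧
  (∀ u ∈ β.fins, (ρ u.1 u.2).IsFinite)

/-- The variables occurring in a basic formula. -/
def Basic.vars (β : σ.Basic) : Set ((s : σ.Srt) × ℕ) :=
  { x | (∃ e ∈ β.eqs, (⟨e.1, e.2.1⟩ : (s : σ.Srt) × ℕ) = x ∨ x ∈ (e.2.2).fv) ∨ x ∈ β.fins }

/-- One step of reachability: `y` occurs in the right-hand side of an equation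
whose left-hand side is `x`. -/
def Basic.step (β : σ.Basic) (x y : (s : σ.Srt) × ℕ) : Prop :=
  ∃ e ∈ β.eqs, (⟨e.1, e.2.1⟩ : (s : σ.Srt) × ℕ) = x ∧ y ∈ (e.2.2).fv

/-- `y` is reachable from `x` (by a chain of equations, possibly empty). -/
def Basic.Reach (β : σ.Basic) (x y : (s : σ.Srt) × ℕ) : Prop :=
  Relation.ReflTransGen β.step x y

/-- `y` is properly reachable from `x` (by a nonempty chain of equations). -/
def Basic.ProperReach (β : σ.Basic) (x y : (s : σ.Srt) × ℕ) : Prop :=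
  Relation.TransGen β.step x y

open Classical in
/-- The index of an element in a list (used to compare variables in a given ordering). -/
noncomputable def idx {A : Type*} (vs : List A) (x : A) : ℕ :=
  vs.findIdx fun y => decide (y = x)

/-- `x` is smaller than `y` in the variable ordering given by the list `vs`. -/
noncomputable def ltv {A : Type*} (vs : List A) (x y : A) : Prop :=
  idx vs x < idx vs y

/-- A basic formula is solved with respect to the variable ordering `vs`:
(1) the left-hand-side variables of equations and the `fin`-variables are
pairwise distinct and every equation `x = y` between variables has `x > y`;
(2) `fin(v)` occurs only if the sort of `v` has both finite and infinite trees. -/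
noncomputable def Solved (vs : List ((s : σ.Srt) × ℕ)) (β : σ.Basic) : Prop :=
  ((β.eqs.map fun e => (⟨e.1, e.2.1⟩ : (s : σ.Srt) × ℕ)) ++ β.fins).Nodup ∧
  (∀ e ∈ β.eqs, ∀ n : ℕ, e.2.2 = Sig.Tm.var e.1 n →
      ltv vs (⟨e.1, n⟩ : (s : σ.Srt) × ℕ) ⟨e.1, e.2.1⟩) ∧
  (∀ u ∈ β.fins, (∃ t : σ.Tree u.1, t.IsFinite) ∧ (∃ t : σ.Tree u.1, ¬ t.IsFinite))

/-- `ρ'` agrees with `ρ` outside the set `V` of variables. -/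
def AgreesOff (ρ ρ' : σ.Val) (V : Set ((s : σ.Srt) × ℕ)) : Prop :=
  ∀ (s : σ.Srt) (n : ℕ), (⟨s, n⟩ : (s : σ.Srt) × ℕ) ∉ V → ρ' s n = ρ s n

variable (σ)

/-- A normal formula of depth at most 2,
`¬(∃x̄. α ∧ ⋀ᵢ ¬(∃ȳᵢ. βᵢ))`, given by the bound variables `x̄`,
the basic formula `α` and the list of pairs `(ȳᵢ, βᵢ)`. -/
structure NF2 where
  xs : List ((s : σ.Srt) × ℕ)
  base : σ.Basic
  inner : List (List ((s : σ.Srt) × ℕ) × σ.Basic)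

variable {σ}

/-- Well-formedness of the basic subformulae of a normal formula of depth ≤ 2. -/
def NF2.WF (φ : σ.NF2) : Prop := φ.base.WF ∧ ∀ p ∈ φ.inner, (p.2).WF

/-- Satisfaction of the inner part `∃x̄. α ∧ ⋀ᵢ ¬(∃ȳᵢ. βᵢ)` of a normal formula
of depth ≤ 2 (this is the shape of a fully simplified formula). -/
def NF2.PosSat (φ : σ.NF2) (ρ : σ.Val) : Prop :=
  ∃ ρ₁ : σ.Val, AgreesOff ρ ρ₁ { x | x ∈ φ.xs } ∧ φ.base.Sat ρ₁ ∧
    ∀ p ∈ φ.inner, ¬ ∃ ρ₂ : σ.Val, AgreesOff ρ₁ ρ₂ { x | x ∈ p.1 } ∧ (p.2).Sat ρ₂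

/-- Satisfaction of a normal formula `¬(∃x̄. α ∧ ⋀ᵢ ¬(∃ȳᵢ. βᵢ))` of depth ≤ 2. -/
def NF2.Sat (φ : σ.NF2) (ρ : σ.Val) : Prop := ¬ φ.PosSat ρ

/-- The free variables of a normal formula of depth ≤ 2. -/
def NF2.fv (φ : σ.NF2) : Set ((s : σ.Srt) × ℕ) :=
  (φ.base.vars \ { x | x ∈ φ.xs }) ∪
    { x | ∃ p ∈ φ.inner, x ∈ (p.2).vars ∧ x ∉ φ.xs ∧ x ∉ p.1 }

/-- All variables occurring (bound or free) in a normal formula of depth ≤ 2. -/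
def NF2.allVars (φ : σ.NF2) : Set ((s : σ.Srt) × ℕ) :=
  φ.base.vars ∪ { x | x ∈ φ.xs } ∪ { x | ∃ p ∈ φ.inner, x ∈ p.1 ∨ x ∈ (p.2).vars }

open Classical in
/-- `β` with all conjuncts also occurring in `α` removed (written `β*`). -/
noncomputable def bstar (α β : σ.Basic) : σ.Basic where
  eqs := β.eqs.filter fun e => decide (e ∉ α.eqs)
  fins := β.fins.filter fun u => decide (u ∉ α.fins)

/-- `β` contains an equation `u = f(w̄)`. -/
def HasEqApp (β : σ.Basic) (u : (s : σ.Srt) × ℕ) : Prop :=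
  ∃ e ∈ β.eqs, (⟨e.1, e.2.1⟩ : (s : σ.Srt) × ℕ) = u ∧ (e.2.2).IsApp

/-- `α` contains an equation with left-hand side `u`. -/
def HasLhs (α : σ.Basic) (u : (s : σ.Srt) × ℕ) : Prop :=
  ∃ e ∈ α.eqs, (⟨e.1, e.2.1⟩ : (s : σ.Srt) × ℕ) = u

/-- Definition of an instantiable variable of a normal formula
`¬(∃x̄. α ∧ ⋀ᵢ ¬(∃ȳᵢ. βᵢ))` of depth at most 2 (Definition of the paper):
`u` is free or among `x̄` and one of the four conditions holds. -/
def NF2.Instantiable (φ : σ.NF2) (u : (s : σ.Srt) × ℕ) : Prop :=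
  (u ∈ φ.fv ∨ u ∈ φ.xs) ∧
  ( ((σ.Gens u.1).Finite ∧ ∃ p ∈ φ.inner,
        HasEqApp (bstar φ.base p.2) u ∧ ¬ (p.2).ProperReach u u)
  ∨ (u.1 ∈ σ.SFF ∩ σ.SFI ∧ (∃ p ∈ φ.inner, u ∈ (bstar φ.base p.2).vars) ∧
        ¬ HasLhs φ.base u)
  ∨ (u.1 ∈ σ.SFF ∧ u ∈ φ.base.fins ∧ ∃ p ∈ φ.inner, u ∈ (bstar φ.base p.2).vars)
  ∨ (u.1 ∈ σ.SFI ∧ ∃ p ∈ φ.inner,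
        (bstar φ.base p.2).eqs = [] ∧ u ∈ (bstar φ.base p.2).fins) )

/-- A normal formula of depth at most 2 is solved (conditions (1)–(5) of the paper):
its basic subformulae are solved with respect to an ordering compatible with binding
depth, the equations of `α` are included in each `βᵢ`, each `βᵢ` has a conjunct not
in `α`, no variable is instantiable, and all bound variables are reachable from
the free variables of the respective subformula. -/
noncomputable def NF2.IsSolved (φ : σ.NF2) : Prop :=
  (∃ vs : List ((s : σ.Srt) × ℕ), vs.Nodup ∧
    (∀ x ∈ φ.allVars, x ∈ vs) ∧
    (∀ a ∈ φ.fv, ∀ b ∈ φ.xs, ltv vs a b) ∧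
    (∀ p ∈ φ.inner, ∀ b ∈ φ.xs, ∀ c ∈ p.1, ltv vs b c) ∧
    (∀ p ∈ φ.inner, ∀ a ∈ φ.fv, ∀ c ∈ p.1, ltv vs a c) ∧
    Solved vs φ.base ∧ ∀ p ∈ φ.inner, Solved vs p.2) ∧
  (∀ p ∈ φ.inner, ∀ e ∈ φ.base.eqs, e ∈ (p.2).eqs) ∧
  (∀ p ∈ φ.inner, (∃ e ∈ (p.2).eqs, e ∉ φ.base.eqs) ∨ (∃ u ∈ (p.2).fins, u ∉ φ.base.fins)) ∧
  (∀ u : (s : σ.Srt) × ℕ, ¬ φ.Instantiable u) ∧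
  (∀ x ∈ φ.xs, ∃ v, v ∈ φ.base.vars ∧ v ∉ φ.xs ∧ φ.base.Reach v x) ∧
  (∀ p ∈ φ.inner, ∀ y ∈ p.1, ∃ v, v ∈ (p.2).vars ∧ v ∉ p.1 ∧ (p.2).Reach v y)

end Sig
section Aux

open Sig Classical

variable {σ : Sig}

/-- The default labeling of sort `s`. -/
noncomputable def defL (hne : ∀ s : σ.Srt, (σ.Gens s).Nonempty) : σ.Srt → List ℕ → Option σ.Gen
  | s, [] => some (hne s).choose
  | s, i :: q =>
    if h : i < (σ.src (hne s).choose).length then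
      defL hne ((σ.src (hne s).choose).get ⟨i, h⟩) q
    else none

lemma tgt_choose (hne : ∀ s : σ.Srt, (σ.Gens s).Nonempty) (s : σ.Srt) :
    σ.tgt (hne s).choose = s := (hne s).choose_spec

lemma defL_isLab (hne : ∀ s : σ.Srt, (σ.Gens s).Nonempty) (s : σ.Srt) :
    σ.IsLabeling (defL hne s) := by
  refine ⟨?_, ?_, ?_⟩
  · intro p hp i
    induction p generalizing s with
    | nil => simp [defL] at hp
    | cons j q ih =>
      simp only [List.cons_append, defL] at hp ⊢
      split at hp
      · rw [dif_pos ‹_›]; exact ih _ hp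
      · rw [dif_neg ‹_›]
  · intro p g hp i
    induction p generalizing s with
    | nil =>
      simp only [defL, Option.some.injEq] at hp
      subst hp
      simp only [List.nil_append, defL]
      by_cases h : i < (σ.src (hne s).choose).length
      · simp [dif_pos h, h, defL]
      · simp [dif_neg h, h]
    | cons j q ih =>
      simp only [List.cons_append, defL] at hp ⊢
      split at hp
      · rw [dif_pos ‹_›]; exact ih _ hp
      · cases hp
  · intro p g i g' hp hpi
    induction p generalizing s with
    | nil =>
      simp only [defL, Option.some.injEq] at hp
      subst hp
      simp only [List.nil_append, defL] at hpi
      split at hpi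
      · next h =>
        -- hpi : defL hne (child) [] = some g'
        simp only [defL, Option.some.injEq] at hpi
        subst hpi
        rw [tgt_choose]
        rw [List.getElem?_eq_getElem h]
        simp [List.get_eq_getElem]
      · cases hpi
    | cons j q ih =>
      simp only [List.cons_append, defL] at hp hpi
      split at hp
      · rw [dif_pos ‹_›] at hpi; exact ih _ hp hpi
      · cases hp

/-- The default tree of sort `s`. -/
noncomputable def defT (hne : ∀ s : σ.Srt, (σ.Gens s).Nonempty) (s : σ.Srt) : σ.Tree s where
  L := defL hne s
  isLab := defL_isLab hne s
  root := ⟨(hne s).choose, rfl, tgt_choose hne s⟩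

lemma Tree.ext' {s : σ.Srt} {t t' : σ.Tree s} (h : t.L = t'.L) : t = t' := by
  cases t; cases t'; simp_all

/-- Shapes of flat terms. -/
inductive Sh (σ : Sig) where
  | svar : ℕ → Sh σ
  | sapp : (g : σ.Gen) → (Fin (σ.src g).length → ℕ) → Sh σ

/-- The variable number of a term (junk for applications). -/
def numOf : ∀ {s : σ.Srt}, σ.Tm s → ℕ
  | _, .var _ n => n
  | _, .app _ _ => 0

/-- The shape of a term. -/
def tmSh : ∀ {s : σ.Srt}, σ.Tm s → Sh σ
  | _, .var _ n => .svar n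
  | _, .app g args => .sapp g fun i => numOf (args i)

lemma tmSh_svar {s : σ.Srt} {t : σ.Tm s} {n : ℕ} (h : tmSh t = .svar n) :
    t = .var s n := by
  cases t with
  | var _ m => simp only [tmSh, Sh.svar.injEq] at h; subst h; rfl
  | app g args => simp [tmSh] at h

lemma tmSh_sapp {s : σ.Srt} {t : σ.Tm s} {g : σ.Gen} {kids : Fin (σ.src g).length → ℕ}
    (h : tmSh t = .sapp g kids) (hf : t.IsFlat) :
    s = σ.tgt g ∧ ∀ ρ : σ.Val,
      (t.eval ρ).L = (σ.build g fun i => ρ ((σ.src g).get i) (kids i)).L := by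
  cases t with
  | var _ m => simp [tmSh] at h
  | app g' args =>
    simp only [tmSh] at h
    injection h with h1 h2
    subst h1
    have h2' : (fun i => numOf (args i)) = kids := eq_of_heq h2
    subst h2'
    refine ⟨rfl, fun ρ => ?_⟩
    have : (fun i => (args i).eval ρ) = fun i => ρ ((σ.src g').get i) (numOf (args i)) := by
      funext i
      obtain ⟨n, hn⟩ := hf i
      rw [hn]; rfl
    show (σ.build g' _).L = _
    rw [this]

/-- The shape of the right-hand side of the (unique) equation with left-hand
side `x`, if any. -/
noncomputable def rhsSh (β : σ.Basic) (x : (s : σ.Srt) × ℕ) : Option (Sh σ) :=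
  if h : ∃ e ∈ β.eqs, (⟨e.1, e.2.1⟩ : (s : σ.Srt) × ℕ) = x then
    some (tmSh h.choose.2.2)
  else none

lemma rhsSh_some {β : σ.Basic} {x : (s : σ.Srt) × ℕ} {sh : Sh σ}
    (h : rhsSh β x = some sh) :
    ∃ e ∈ β.eqs, (⟨e.1, e.2.1⟩ : (s : σ.Srt) × ℕ) = x ∧ tmSh e.2.2 = sh := by
  unfold rhsSh at h
  split at h
  · next hex =>
    obtain ⟨he, hx⟩ := hex.choose_spec
    exact ⟨hex.choose, he, hx, by injection h⟩
  · cases h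

lemma rhsSh_eq {vs : List ((s : σ.Srt) × ℕ)} {β : σ.Basic} (hsol : Sig.Solved vs β)
    {e : (s : σ.Srt) × ℕ × σ.Tm s} (he : e ∈ β.eqs) :
    rhsSh β (⟨e.1, e.2.1⟩ : (s : σ.Srt) × ℕ) = some (tmSh e.2.2) := by
  have hex : ∃ e' ∈ β.eqs, (⟨e'.1, e'.2.1⟩ : (s : σ.Srt) × ℕ) = ⟨e.1, e.2.1⟩ :=
    ⟨e, he, rfl⟩
  have hinj := List.inj_on_of_nodup_map (f := fun e : (s : σ.Srt) × ℕ × σ.Tm s => (⟨e.1, e.2.1⟩ : (s : σ.Srt) × ℕ))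
    (hsol.1.of_append_left)
  obtain ⟨he', hx⟩ := hex.choose_spec
  have : hex.choose = e := hinj he' he hx
  rw [rhsSh, dif_pos hex, this]

lemma rhsSh_fins {vs : List ((s : σ.Srt) × ℕ)} {β : σ.Basic} (hsol : Sig.Solved vs β)
    {u} (hu : u ∈ β.fins) : rhsSh β u = none := by
  rw [rhsSh, dif_neg]
  rintro ⟨e, he, hx⟩
  have hd := List.disjoint_of_nodup_append hsol.1
  exact hd (List.mem_map.2 ⟨e, he, hx⟩) hu

lemma idx_lt {vs : List ((s : σ.Srt) × ℕ)} {β : σ.Basic} (hsol : Sig.Solved vs β)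
    {x : (s : σ.Srt) × ℕ} {n : ℕ} (h : rhsSh β x = some (.svar n)) :
    Sig.idx vs ⟨x.1, n⟩ < Sig.idx vs x := by
  obtain ⟨e, he, hx, hsh⟩ := rhsSh_some h
  have hv := tmSh_svar hsh
  subst hx
  exact hsol.2.1 e he n hv

lemma rhsSh_sapp_sort {β : σ.Basic} (hwf : β.WF)
    {x : (s : σ.Srt) × ℕ} {g kids} (h : rhsSh β x = some (.sapp g kids)) :
    x.1 = σ.tgt g := by
  obtain ⟨e, he, hx, hsh⟩ := rhsSh_some h
  subst hx
  exact (tmSh_sapp hsh (hwf e he)).1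

/-- The base valuation: chosen finite trees for `fin`-variables, default trees
elsewhere. -/
noncomputable def rho0 (hne : ∀ s : σ.Srt, (σ.Gens s).Nonempty)
    {vs : List ((s : σ.Srt) × ℕ)} {β : σ.Basic} (hsol : Sig.Solved vs β)
    (s : σ.Srt) (n : ℕ) : σ.Tree s :=
  if h : (⟨s, n⟩ : (s : σ.Srt) × ℕ) ∈ β.fins then (hsol.2.2 ⟨s, n⟩ h).1.choose
  else defT hne s

lemma rho0_fin (hne : ∀ s : σ.Srt, (σ.Gens s).Nonempty)
    {vs : List ((s : σ.Srt) × ℕ)} {β : σ.Basic} (hsol : Sig.Solved vs β)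
    {s : σ.Srt} {n : ℕ} (h : (⟨s, n⟩ : (s : σ.Srt) × ℕ) ∈ β.fins) :
    (rho0 hne hsol s n).IsFinite := by
  rw [rho0, dif_pos h]
  exact (hsol.2.2 ⟨s, n⟩ h).1.choose_spec

/-- The solution labeling. -/
noncomputable def resolve (hne : ∀ s : σ.Srt, (σ.Gens s).Nonempty)
    (vs : List ((s : σ.Srt) × ℕ)) (β : σ.Basic) (hsol : Sig.Solved vs β) :
    ((s : σ.Srt) × ℕ) → List ℕ → Option σ.Gen
  | x, p =>
    match hx : rhsSh β x with
    | none => (rho0 hne hsol x.1 x.2).L p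
    | some (.svar n) => resolve hne vs β hsol ⟨x.1, n⟩ p
    | some (.sapp g kids) =>
      match p with
      | [] => some g
      | i :: q =>
        if h : i < (σ.src g).length then
          resolve hne vs β hsol ⟨(σ.src g).get ⟨i, h⟩, kids ⟨i, h⟩⟩ q
        else none
  termination_by x p => (p.length, Sig.idx vs x)
  decreasing_by
  · exact Prod.Lex.right _ (idx_lt hsol hx)
  · exact Prod.Lex.left _ _ (by subst_vars; simp)

theorem resolve_eq (hne : ∀ s : σ.Srt, (σ.Gens s).Nonempty)
    (vs : List ((s : σ.Srt) × ℕ)) (β : σ.Basic) (hsol : Sig.Solved vs β)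
    (x : (s : σ.Srt) × ℕ) (p : List ℕ) :
    resolve hne vs β hsol x p =
      match rhsSh β x with
      | none => (rho0 hne hsol x.1 x.2).L p
      | some (.svar n) => resolve hne vs β hsol ⟨x.1, n⟩ p
      | some (.sapp g kids) =>
        match p with
        | [] => some g
        | i :: q =>
          if h : i < (σ.src g).length then
            resolve hne vs β hsol ⟨(σ.src g).get ⟨i, h⟩, kids ⟨i, h⟩⟩ q
          else none := by
  rw [resolve]
  split
  · next heq => rw [heq]
  · next n heq => rw [heq]
  · next g kids heq => rw [heq]

variable {hne : ∀ s : σ.Srt, (σ.Gens s).Nonempty}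
  {vs : List ((s : σ.Srt) × ℕ)} {β : σ.Basic} {hsol : Sig.Solved vs β}

theorem resolve_of_none {x : (s : σ.Srt) × ℕ} (h : rhsSh β x = none) (p : List ℕ) :
    resolve hne vs β hsol x p = (rho0 hne hsol x.1 x.2).L p := by
  rw [resolve_eq, h]

theorem resolve_of_svar {x : (s : σ.Srt) × ℕ} {n : ℕ} (h : rhsSh β x = some (.svar n))
    (p : List ℕ) :
    resolve hne vs β hsol x p = resolve hne vs β hsol ⟨x.1, n⟩ p := by
  rw [resolve_eq, h]

theorem resolve_of_sapp_nil {x : (s : σ.Srt) × ℕ} {g kids}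
    (h : rhsSh β x = some (.sapp g kids)) :
    resolve hne vs β hsol x [] = some g := by
  rw [resolve_eq, h]

theorem resolve_of_sapp_cons {x : (s : σ.Srt) × ℕ} {g kids}
    (h : rhsSh β x = some (.sapp g kids)) (i : ℕ) (q : List ℕ) :
    resolve hne vs β hsol x (i :: q) =
      if hi : i < (σ.src g).length then
        resolve hne vs β hsol ⟨(σ.src g).get ⟨i, hi⟩, kids ⟨i, hi⟩⟩ q
      else none := by
  rw [resolve_eq, h]

theorem resolve_root (hwf : β.WF) (x : (s : σ.Srt) × ℕ) :
    ∃ g, resolve hne vs β hsol x [] = some g ∧ σ.tgt g = x.1 := by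
  cases hx : rhsSh β x with
  | none =>
    rw [resolve_of_none hx]
    exact (rho0 hne hsol x.1 x.2).root
  | some sh =>
    cases sh with
    | svar n =>
      rw [resolve_of_svar hx]
      exact resolve_root hwf ⟨x.1, n⟩
    | sapp g kids =>
      exact ⟨g, resolve_of_sapp_nil hx, (rhsSh_sapp_sort hwf hx).symm⟩
termination_by Sig.idx vs x
decreasing_by exact idx_lt hsol hx

theorem resolve_lab1 (x : (s : σ.Srt) × ℕ) (p : List ℕ)
    (h : resolve hne vs β hsol x p = none) (i : ℕ) :
    resolve hne vs β hsol x (p ++ [i]) = none := by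
  cases hx : rhsSh β x with
  | none =>
    rw [resolve_of_none hx] at h ⊢
    exact (rho0 hne hsol x.1 x.2).isLab.1 p h i
  | some sh =>
    cases sh with
    | svar n =>
      rw [resolve_of_svar hx] at h ⊢
      exact resolve_lab1 ⟨x.1, n⟩ p h i
    | sapp g kids =>
      cases p with
      | nil => rw [resolve_of_sapp_nil hx] at h; cases h
      | cons j q =>
        rw [resolve_of_sapp_cons hx] at h
        rw [List.cons_append, resolve_of_sapp_cons hx]
        split at h
        · next hj => rw [dif_pos hj]; exact resolve_lab1 _ q h i
        · next hj => rw [dif_neg hj]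
termination_by (p.length, Sig.idx vs x)
decreasing_by
  · exact Prod.Lex.right _ (idx_lt hsol hx)
  · exact Prod.Lex.left _ _ (by subst_vars; simp)

theorem resolve_lab2 (hwf : β.WF) (x : (s : σ.Srt) × ℕ) (p : List ℕ) (g : σ.Gen)
    (h : resolve hne vs β hsol x p = some g) (i : ℕ) :
    (resolve hne vs β hsol x (p ++ [i])).isSome ↔ i < (σ.src g).length := by
  cases hx : rhsSh β x with
  | none =>
    rw [resolve_of_none hx] at h ⊢
    exact (rho0 hne hsol x.1 x.2).isLab.2.1 p g h i
  | some sh =>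
    cases sh with
    | svar n =>
      rw [resolve_of_svar hx] at h ⊢
      exact resolve_lab2 hwf ⟨x.1, n⟩ p g h i
    | sapp g0 kids =>
      cases p with
      | nil =>
        rw [resolve_of_sapp_nil hx, Option.some.injEq] at h
        subst h
        rw [show (([] : List ℕ) ++ [i]) = i :: [] from rfl, resolve_of_sapp_cons hx]
        split
        · next hi =>
          obtain ⟨g', hg', -⟩ := resolve_root (hne := hne) (vs := vs) (β := β)
            (hsol := hsol) hwf ⟨(σ.src g0).get ⟨i, hi⟩, kids ⟨i, hi⟩⟩
          simp only [List.get_eq_getElem] at hg'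
          simp [hg', hi]
        · next hi => simp [hi]
      | cons j q =>
        rw [resolve_of_sapp_cons hx] at h
        rw [List.cons_append, resolve_of_sapp_cons hx]
        split at h
        · next hj => rw [dif_pos hj]; exact resolve_lab2 hwf _ q g h i
        · cases h
termination_by (p.length, Sig.idx vs x)
decreasing_by
  · exact Prod.Lex.right _ (idx_lt hsol hx)
  · exact Prod.Lex.left _ _ (by subst_vars; simp)

theorem resolve_lab3 (hwf : β.WF) (x : (s : σ.Srt) × ℕ) (p : List ℕ) (g : σ.Gen)
    (i : ℕ) (g' : σ.Gen)
    (h : resolve hne vs β hsol x p = some g)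
    (h' : resolve hne vs β hsol x (p ++ [i]) = some g') :
    (σ.src g)[i]? = some (σ.tgt g') := by
  cases hx : rhsSh β x with
  | none =>
    rw [resolve_of_none hx] at h h'
    exact (rho0 hne hsol x.1 x.2).isLab.2.2 p g i g' h h'
  | some sh =>
    cases sh with
    | svar n =>
      rw [resolve_of_svar hx] at h h'
      exact resolve_lab3 hwf ⟨x.1, n⟩ p g i g' h h'
    | sapp g0 kids =>
      cases p with
      | nil =>
        rw [resolve_of_sapp_nil hx, Option.some.injEq] at h
        subst h
        rw [show (([] : List ℕ) ++ [i]) = i :: [] from rfl, resolve_of_sapp_cons hx] at h'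
        split at h'
        · next hi =>
          obtain ⟨g'', hg'', ht⟩ := resolve_root (hne := hne) (vs := vs) (β := β)
            (hsol := hsol) hwf ⟨(σ.src g0).get ⟨i, hi⟩, kids ⟨i, hi⟩⟩
          rw [hg'', Option.some.injEq] at h'
          subst h'
          rw [List.getElem?_eq_getElem hi]
          simp [ht, List.get_eq_getElem]
        · cases h'
      | cons j q =>
        rw [resolve_of_sapp_cons hx] at h
        rw [List.cons_append, resolve_of_sapp_cons hx] at h'
        split at h
        · next hj =>
          rw [dif_pos hj] at h'
          exact resolve_lab3 hwf _ q g i g' h h'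
        · cases h
termination_by (p.length, Sig.idx vs x)
decreasing_by
  · exact Prod.Lex.right _ (idx_lt hsol hx)
  · exact Prod.Lex.left _ _ (by subst_vars; simp)

/-- The solution valuation. -/
noncomputable def solV (hne : ∀ s : σ.Srt, (σ.Gens s).Nonempty)
    (vs : List ((s : σ.Srt) × ℕ)) (β : σ.Basic) (hsol : Sig.Solved vs β)
    (hwf : β.WF) : σ.Val := fun s n =>
  { L := resolve hne vs β hsol ⟨s, n⟩
    isLab := ⟨fun p h i => resolve_lab1 ⟨s, n⟩ p h i,
      fun p g h i => resolve_lab2 hwf ⟨s, n⟩ p g h i,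
      fun p g i g' h h' => resolve_lab3 hwf ⟨s, n⟩ p g i g' h h'⟩
    root := resolve_root hwf ⟨s, n⟩ }

end Aux

/-- Every solved basic formula is satisfiable in the structure
`𝒯` of trees (assuming, as always, that every sort has at least one generator). -/
theorem solved_basic_satisfiable (σ : Sig)
    (hne : ∀ s : σ.Srt, (σ.Gens s).Nonempty)
    (vs : List ((s : σ.Srt) × ℕ)) (β : σ.Basic)
    (hnd : vs.Nodup) (hwf : β.WF) (hvs : ∀ x ∈ β.vars, x ∈ vs)
    (hsol : Sig.Solved vs β) :
    ∃ ρ : σ.Val, β.Sat ρ := by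
  classical
  refine ⟨solV hne vs β hsol hwf, ?_, ?_⟩
  · intro e he
    have hx := rhsSh_eq hsol he
    cases hsh : tmSh e.2.2 with
    | svar n =>
      rw [hsh] at hx
      have hv : e.2.2 = .var e.1 n := tmSh_svar hsh
      rw [hv]
      apply Tree.ext'
      funext p
      show resolve hne vs β hsol ⟨e.1, e.2.1⟩ p
        = ((Sig.Tm.var e.1 n).eval (solV hne vs β hsol hwf)).L p
      rw [resolve_of_svar hx]
      rfl
    | sapp g kids =>
      rw [hsh] at hx
      obtain ⟨hs, hL⟩ := tmSh_sapp hsh (hwf e he)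
      apply Tree.ext'
      rw [hL (solV hne vs β hsol hwf)]
      funext p
      cases p with
      | nil =>
        show resolve hne vs β hsol ⟨e.1, e.2.1⟩ [] = _
        rw [resolve_of_sapp_nil hx]
        rfl
      | cons i q =>
        show resolve hne vs β hsol ⟨e.1, e.2.1⟩ (i :: q) = _
        rw [resolve_of_sapp_cons hx]
        rfl
  · intro u hu
    have hn := rhsSh_fins hsol hu
    have heq : solV hne vs β hsol hwf u.1 u.2 = rho0 hne hsol u.1 u.2 :=
      Tree.ext' (funext fun p => resolve_of_none hn p)
    rw [heq]
    exact rho0_fin hne hsol hu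
end

section
/- Let v be a variable of sort s such that s has infinitely many trees (i.e. s ∉ S_FF ∩ S_FI). Let β₁,…,β_m be solved basic formulae in each of which v is properly reachable from itself, and let T be a finite set of trees of sort s. Then there exists a tree v* of sort s with v* ∉ T such that in the structure 𝒯 of trees, every valuation assigning v* to v falsifies every βᵢ. Moreover v* can be chosen to be a finite tree if s ∉ S_FF, and an infinite tree if s ∉ S_FI. -/
set_option linter.unusedVariables false


namespace Sig

variable {σ : Sig}

/-- `t` is periodic with period `p`: the subtree at `p` equals `t`. -/
def Periodic {s : σ.Srt} (t : σ.Tree s) (p : List ℕ) : Prop :=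
  ∀ q, t.L (p ++ q) = t.L q

/-- `k`-fold repetition of a list. -/
def lrep (p : List ℕ) : ℕ → List ℕ
  | 0 => []
  | k + 1 => p ++ lrep p k

lemma lrep_length (p : List ℕ) (k : ℕ) : (lrep p k).length = k * p.length := by
  induction k with
  | zero => simp [lrep]
  | succ k ih => simp [lrep, ih]; ring

lemma Periodic.lrep_eq {s : σ.Srt} {t : σ.Tree s} {p : List ℕ} (h : Periodic t p)
    (k : ℕ) (q : List ℕ) : t.L (lrep p k ++ q) = t.L q := by
  induction k with
  | zero => simp [lrep]
  | succ k ih => rw [lrep, List.append_assoc, h, ih]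

lemma Tree.root_isSome {s : σ.Srt} (t : σ.Tree s) : (t.L []).isSome := by
  obtain ⟨g, hg, -⟩ := t.root; simp [hg]

lemma Periodic.not_finite {s : σ.Srt} {t : σ.Tree s} {p : List ℕ}
    (hp : p ≠ []) (h : Periodic t p) : ¬ t.IsFinite := by
  intro hfin
  have hmem : ∀ k, lrep p k ∈ {q | (t.L q).isSome} := by
    intro k
    have h1 : t.L (lrep p k) = t.L [] := by
      have := h.lrep_eq k []
      simpa using this
    simp only [Set.mem_setOf_eq, h1]
    exact t.root_isSome
  have hinj : Function.Injective (lrep p) := by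
    intro a b hab
    have hl := congrArg List.length hab
    rw [lrep_length, lrep_length] at hl
    have hp' : 0 < p.length := List.length_pos_iff.mpr hp
    exact Nat.eq_of_mul_eq_mul_right hp' hl
  exact (Set.infinite_of_injective_forall_mem hinj hmem) hfin

lemma prefix_snoc {d q : List ℕ} {i : ℕ} (h : d <+: q ++ [i]) :
    d <+: q ∨ d = q ++ [i] := by
  by_cases hle : d.length ≤ q.length
  · left
    have h1 : d = (q ++ [i]).take d.length := List.prefix_iff_eq_take.mp h
    rw [List.take_append_of_le_length hle] at h1
    exact h1 ▸ List.take_prefix _ q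
  · right
    have h2 := h.length_le
    have h3 : (q ++ [i]).length = q.length + 1 := by simp
    exact h.eq_of_length (by omega)

open Classical in
/-- Graft `u` at position `d` of `t`, where the subtree of `t` at `d` is `t`
itself (so sorts match). -/
noncomputable def graftSelf {s : σ.Srt} (t : σ.Tree s) (d : List ℕ)
    (hd : ∀ q, t.L (d ++ q) = t.L q) (hdne : d ≠ []) (u : σ.Tree s) : σ.Tree s where
  L := fun q => if d <+: q then u.L (q.drop d.length) else t.L q
  isLab := by
    have hdrop : ∀ q : List ℕ, d <+: q → ∀ i : ℕ,
        (q ++ [i]).drop d.length = q.drop d.length ++ [i] := by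
      intro q hq i
      rw [List.drop_append_of_le_length hq.length_le]
    have htd : t.L d = t.L [] := by simpa using hd []
    refine ⟨?_, ?_, ?_⟩
    · intro q hq i
      by_cases h1 : d <+: q
      · have h2 : d <+: q ++ [i] := h1.trans (List.prefix_append q [i])
        simp only [if_pos h1] at hq
        simp only [if_pos h2, hdrop q h1 i]
        exact u.isLab.1 _ hq i
      · simp only [if_neg h1] at hq
        by_cases h2 : d <+: q ++ [i]
        · rcases prefix_snoc h2 with h3 | h3
          · exact absurd h3 h1
          · exfalso
            have h4 := t.isLab.1 q hq i
            have h5 : t.L [] = none := by rw [← htd, h3, h4]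
            have h6 := t.root_isSome
            rw [h5] at h6
            simp at h6
        · simp only [if_neg h2]
          exact t.isLab.1 q hq i
    · intro q g hq i
      by_cases h1 : d <+: q
      · have h2 : d <+: q ++ [i] := h1.trans (List.prefix_append q [i])
        simp only [if_pos h1] at hq
        simp only [if_pos h2, hdrop q h1 i]
        exact u.isLab.2.1 _ g hq i
      · simp only [if_neg h1] at hq
        by_cases h2 : d <+: q ++ [i]
        · rcases prefix_snoc h2 with h3 | h3
          · exact absurd h3 h1
          · have hts : (t.L (q ++ [i])).isSome := by
              rw [← h3, htd]; exact t.root_isSome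
            have hi : i < (σ.src g).length := (t.isLab.2.1 q g hq i).mp hts
            have hdr : (q ++ [i]).drop d.length = [] := by
              rw [h3, List.drop_length]
            simp only [if_pos h2, hdr]
            exact iff_of_true u.root_isSome hi
        · simp only [if_neg h2]
          exact t.isLab.2.1 q g hq i
    · intro q g i g' hq hqi
      by_cases h1 : d <+: q
      · have h2 : d <+: q ++ [i] := h1.trans (List.prefix_append q [i])
        simp only [if_pos h1] at hq
        simp only [if_pos h2, hdrop q h1 i] at hqi
        exact u.isLab.2.2 _ g i g' hq hqi
      · simp only [if_neg h1] at hq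
        by_cases h2 : d <+: q ++ [i]
        · rcases prefix_snoc h2 with h3 | h3
          · exact absurd h3 h1
          · obtain ⟨g0, hg0, hg0s⟩ := t.root
            obtain ⟨g1, hg1, hg1s⟩ := u.root
            have htd' : t.L (q ++ [i]) = some g0 := by rw [← h3, htd, hg0]
            have h5 := t.isLab.2.2 q g i g0 hq htd'
            have hdr : (q ++ [i]).drop d.length = [] := by
              rw [h3, List.drop_length]
            simp only [if_pos h2, hdr, hg1] at hqi
            injection hqi with hqi
            subst hqi
            rw [h5, hg0s, hg1s]
        · simp only [if_neg h2] at hqi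
          exact t.isLab.2.2 q g i g' hq hqi
  root := by
    have h0 : ¬ d <+: ([] : List ℕ) := fun h => hdne (List.prefix_nil.mp h)
    obtain ⟨g, hg, hgs⟩ := t.root
    exact ⟨g, by simp only [if_neg h0]; exact hg, hgs⟩

lemma graftSelf_L_of_not_prefix {s : σ.Srt} {t : σ.Tree s} {d : List ℕ}
    {hd : ∀ q, t.L (d ++ q) = t.L q} {hdne : d ≠ []} {u : σ.Tree s} {q : List ℕ}
    (hq : ¬ d <+: q) : (graftSelf t d hd hdne u).L q = t.L q := by
  simp only [graftSelf, if_neg hq]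

lemma graftSelf_L_append {s : σ.Srt} {t : σ.Tree s} {d : List ℕ}
    {hd : ∀ q, t.L (d ++ q) = t.L q} {hdne : d ≠ []} {u : σ.Tree s} (r : List ℕ) :
    (graftSelf t d hd hdne u).L (d ++ r) = u.L r := by
  simp only [graftSelf, if_pos (List.prefix_append d r), List.drop_left]

lemma graftSelf_not_finite {s : σ.Srt} {t : σ.Tree s} {d : List ℕ}
    {hd : ∀ q, t.L (d ++ q) = t.L q} {hdne : d ≠ []} {u : σ.Tree s}
    (hu : ¬ u.IsFinite) : ¬ (graftSelf t d hd hdne u).IsFinite := by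
  intro hfin
  apply hu
  have hinj : Set.InjOn (fun r : List ℕ => d ++ r)
      ((fun r : List ℕ => d ++ r) ⁻¹' {q | ((graftSelf t d hd hdne u).L q).isSome}) := by
    intro a _ b _ hab
    exact List.append_cancel_left hab
  have hsub : {r : List ℕ | (u.L r).isSome} ⊆
      (fun r : List ℕ => d ++ r) ⁻¹' {q | ((graftSelf t d hd hdne u).L q).isSome} := by
    intro r hr
    simp only [Set.mem_preimage, Set.mem_setOf_eq, graftSelf_L_append]
    exact hr
  exact Set.Finite.subset (hfin.preimage hinj) hsub

lemma exists_strip {p : List ℕ} (hp : p ≠ []) (x : List ℕ) :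
    ∃ k y, x = lrep p k ++ y ∧ ¬ p <+: y := by
  suffices H : ∀ m, ∀ x : List ℕ, x.length ≤ m →
      ∃ k y, x = lrep p k ++ y ∧ ¬ p <+: y from H x.length x le_rfl
  intro m
  induction m with
  | zero =>
    intro x hx
    have hxnil : x = [] := List.eq_nil_of_length_eq_zero (Nat.le_zero.mp hx)
    subst hxnil
    exact ⟨0, [], by simp [lrep], fun h => hp (List.prefix_nil.mp h)⟩
  | succ m ih =>
    intro x hx
    by_cases hpre : p <+: x
    · obtain ⟨r, hr⟩ := hpre
      have hrlen : r.length ≤ m := by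
        have h1 : p.length + r.length = x.length := by
          rw [← hr, List.length_append]
        have hp1 : 1 ≤ p.length := List.length_pos_iff.mpr hp
        omega
      obtain ⟨k, y, hy, hny⟩ := ih r hrlen
      exact ⟨k + 1, y, by rw [← hr, hy, lrep, List.append_assoc], hny⟩
    · exact ⟨0, x, by simp [lrep], hpre⟩

lemma witness_bound {s : σ.Srt} (t1 : σ.Tree s) :
    ∀ P' : List (List ℕ), (∀ q ∈ P', ¬ Periodic t1 q) →
    ∃ B : ℕ, ∀ q ∈ P', ∃ r, t1.L (q ++ r) ≠ t1.L r ∧ (q ++ r).length < B := by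
  intro P'
  induction P' with
  | nil => exact fun _ => ⟨0, by simp⟩
  | cons a P'' ih =>
    intro h
    obtain ⟨B'', hB''⟩ := ih (fun q hq => h q (List.mem_cons_of_mem a hq))
    have ha : ¬ Periodic t1 a := h a (List.mem_cons_self)
    rw [Periodic] at ha
    push_neg at ha
    obtain ⟨r0, hr0⟩ := ha
    refine ⟨max ((a ++ r0).length + 1) B'', ?_⟩
    intro q hq
    rcases List.mem_cons.mp hq with rfl | hq'
    · exact ⟨r0, hr0, by have := le_max_left ((q ++ r0).length + 1) B''; omega⟩
    · obtain ⟨r, h1, h2⟩ := hB'' q hq'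
      exact ⟨r, h1, by have := le_max_right ((a ++ r0).length + 1) B''; omega⟩

/-- Key combinatorial lemma: if a sort has infinitely many infinite trees, then
infinitely many infinite trees avoid every period in any given finite list. -/
lemma avoid {s : σ.Srt} (hinf : {t : σ.Tree s | ¬ t.IsFinite}.Infinite) :
    ∀ P : List (List ℕ), (∀ p ∈ P, p ≠ []) →
    {t : σ.Tree s | ¬ t.IsFinite ∧ ∀ p ∈ P, ¬ Periodic t p}.Infinite := by
  intro P
  induction P with
  | nil => intro _; simpa using hinf
  | cons p P' ih =>
    intro hne
    have hpne : p ≠ [] := hne p (List.mem_cons_self)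
    have hA' := ih (fun q hq => hne q (List.mem_cons_of_mem p hq))
    set A' := {t : σ.Tree s | ¬ t.IsFinite ∧ ∀ q ∈ P', ¬ Periodic t q} with hA'def
    by_cases hcase : {t | t ∈ A' ∧ ¬ Periodic t p}.Infinite
    · apply hcase.mono
      rintro t ⟨⟨h1, h2⟩, h3⟩
      refine ⟨h1, ?_⟩
      intro q hq
      rcases List.mem_cons.mp hq with rfl | hq'
      · exact h3
      · exact h2 q hq'
    · have hK : {t | t ∈ A' ∧ Periodic t p}.Infinite := by
        have hsub : A' ⊆ {t | t ∈ A' ∧ ¬ Periodic t p} ∪ {t | t ∈ A' ∧ Periodic t p} := by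
          intro t ht
          by_cases h : Periodic t p
          · exact Or.inr ⟨ht, h⟩
          · exact Or.inl ⟨ht, h⟩
        by_contra hfin
        rw [Set.not_infinite] at hcase hfin
        exact hA' (Set.Finite.subset (hcase.union hfin) hsub)
      obtain ⟨t1, ⟨⟨ht1inf, ht1av⟩, ht1per⟩⟩ := hK.nonempty
      obtain ⟨B, hB⟩ := witness_bound t1 P' ht1av
      set d := lrep p (B + 1) with hd_def
      have hdsub : ∀ q, t1.L (d ++ q) = t1.L q := fun q => ht1per.lrep_eq (B + 1) q
      have hpd : p <+: d := ⟨lrep p B, by rw [hd_def, lrep]⟩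
      have hdne : d ≠ [] := by
        intro h0
        exact hpne (List.prefix_nil.mp (h0 ▸ hpd))
      have hdlen : B < d.length := by
        rw [hd_def, lrep_length]
        have h1 : 0 < p.length := List.length_pos_iff.mpr hpne
        calc B < B + 1 := Nat.lt_succ_self B
        _ ≤ (B + 1) * p.length := Nat.le_mul_of_pos_right _ h1
      set F : σ.Tree s → σ.Tree s := fun u => graftSelf t1 d hdsub hdne u with hF
      have himg : ∀ u : σ.Tree s, ¬ u.IsFinite → u ≠ t1 →
          F u ∈ {t : σ.Tree s | ¬ t.IsFinite ∧ ∀ q ∈ p :: P', ¬ Periodic t q} := by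
        intro u huinf hune
        refine ⟨graftSelf_not_finite huinf, ?_⟩
        intro q hq
        rcases List.mem_cons.mp hq with hq0 | hq'
        · intro hper
          rw [hq0] at hper
          have hFeq : F u = t1 := by
            apply Tree.ext'
            funext x
            obtain ⟨k, y, rfl, hny⟩ := exists_strip hpne x
            have h1 : (F u).L (lrep p k ++ y) = (F u).L y := hper.lrep_eq k y
            have h2 : ¬ d <+: y := fun hpre => hny (hpd.trans hpre)
            rw [h1, graftSelf_L_of_not_prefix h2, ht1per.lrep_eq k y]
          apply hune
          apply Tree.ext'
          funext r
          have h3 : (F u).L (d ++ r) = u.L r := graftSelf_L_append r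
          rw [hFeq, hdsub r] at h3
          exact h3.symm
        · intro hper
          obtain ⟨r, hrneq, hrlen⟩ := hB q hq'
          apply hrneq
          have hx1 : ¬ d <+: q ++ r := fun h => by
            have := h.length_le; omega
          have hx2 : ¬ d <+: r := fun h => by
            have h4 := h.length_le
            have h5 : r.length ≤ (q ++ r).length := by
              rw [List.length_append]; omega
            omega
          calc t1.L (q ++ r) = (F u).L (q ++ r) := (graftSelf_L_of_not_prefix hx1).symm
          _ = (F u).L r := hper r
          _ = t1.L r := graftSelf_L_of_not_prefix hx2
      have hinj : Set.InjOn F ({t | t ∈ A' ∧ Periodic t p} \ {t1}) := by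
        intro a _ b _ hab
        apply Tree.ext'
        funext r
        have h1 : (F a).L (d ++ r) = (F b).L (d ++ r) := by rw [hab]
        rwa [graftSelf_L_append, graftSelf_L_append] at h1
      have himage : (F '' ({t | t ∈ A' ∧ Periodic t p} \ {t1})).Infinite :=
        Set.Infinite.image hinj (hK.diff (Set.finite_singleton t1))
      apply himage.mono
      rintro _ ⟨u, ⟨⟨⟨huinf, _⟩, _⟩, hune⟩, rfl⟩
      exact himg u huinf (by simpa using hune)

lemma build_L_cons (g : σ.Gen) (c : ∀ i : Fin (σ.src g).length, σ.Tree ((σ.src g).get i))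
    (i : Fin (σ.src g).length) (q : List ℕ) :
    (σ.build g c).L (i.1 :: q) = (c i).L q := by
  show (if h : i.1 < (σ.src g).length then (c ⟨i.1, h⟩).L q else none) = (c i).L q
  rw [dif_pos i.isLt]

lemma step_sub {β : σ.Basic} {vs : List ((s : σ.Srt) × ℕ)}
    (hwfβ : β.WF) (hsolβ : Solved vs β) {x y : (s : σ.Srt) × ℕ}
    (hstep : β.step x y) :
    ∃ p : List ℕ,
      (∀ ρ : σ.Val, β.Sat ρ → ∀ q, (ρ x.1 x.2).L (p ++ q) = (ρ y.1 y.2).L q) ∧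
      (p = [] → ltv vs y x) := by
  obtain ⟨e, he, hlhs, hyfv⟩ := hstep
  obtain ⟨s1, n1, tm⟩ := e
  subst hlhs
  cases tm with
  | var s1 n' =>
    have hy : y = ⟨s1, n'⟩ := by
      simpa [Tm.fv] using hyfv
    subst hy
    refine ⟨[], ?_, ?_⟩
    · intro ρ hρ q
      have h1 := hρ.1 ⟨s1, n1, Tm.var s1 n'⟩ he
      simp only [Tm.eval] at h1
      rw [List.nil_append, h1]
    · intro _
      exact hsolβ.2.1 ⟨s1, n1, Tm.var s1 n'⟩ he n' rfl
  | app g args =>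
    have hflat := hwfβ ⟨σ.tgt g, n1, Tm.app g args⟩ he
    simp only [Tm.fv, Set.mem_iUnion] at hyfv
    obtain ⟨i, hi⟩ := hyfv
    obtain ⟨n', hn'⟩ := hflat i
    rw [hn'] at hi
    have hy : y = ⟨(σ.src g).get i, n'⟩ := by
      simpa [Tm.fv] using hi
    subst hy
    refine ⟨[i.1], ?_, ?_⟩
    · intro ρ hρ q
      have h1 := hρ.1 ⟨σ.tgt g, n1, Tm.app g args⟩ he
      simp only [Tm.eval] at h1
      rw [h1]
      show (σ.build g fun j => (args j).eval ρ).L (i.1 :: q) = _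
      rw [build_L_cons g _ i q, hn']
      rfl
    · intro h0
      exact absurd h0 (by simp)

lemma reach_sub {β : σ.Basic} {vs : List ((s : σ.Srt) × ℕ)}
    (hwfβ : β.WF) (hsolβ : Solved vs β) {x y : (s : σ.Srt) × ℕ}
    (h : β.ProperReach x y) :
    ∃ p : List ℕ,
      (∀ ρ : σ.Val, β.Sat ρ → ∀ q, (ρ x.1 x.2).L (p ++ q) = (ρ y.1 y.2).L q) ∧
      (p = [] → ltv vs y x) := by
  induction h with
  | single hstep => exact step_sub hwfβ hsolβ hstep
  | tail h1 hstep ih =>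
    obtain ⟨p1, hp1, hl1⟩ := ih
    obtain ⟨p2, hp2, hl2⟩ := step_sub hwfβ hsolβ hstep
    refine ⟨p1 ++ p2, ?_, ?_⟩
    · intro ρ hρ q
      rw [List.append_assoc, hp1 ρ hρ (p2 ++ q), hp2 ρ hρ q]
    · intro h0
      obtain ⟨ha, hb⟩ := List.append_eq_nil_iff.mp h0
      exact lt_trans (hl2 hb) (hl1 ha)

lemma cycle_periodic {β : σ.Basic} {vs : List ((s : σ.Srt) × ℕ)}
    (hwfβ : β.WF) (hsolβ : Solved vs β) {s : σ.Srt} {n : ℕ}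
    (h : β.ProperReach ⟨s, n⟩ ⟨s, n⟩) :
    ∃ p : List ℕ, p ≠ [] ∧ ∀ ρ : σ.Val, β.Sat ρ → Periodic (ρ s n) p := by
  obtain ⟨p, hp, hl⟩ := reach_sub hwfβ hsolβ h
  refine ⟨p, ?_, fun ρ hρ q => hp ρ hρ q⟩
  intro h0
  exact absurd (hl h0) (lt_irrefl _)

lemma periods_exist {vs : List ((s : σ.Srt) × ℕ)} (s : σ.Srt) (n : ℕ) :
    ∀ Bs : List σ.Basic, (∀ β ∈ Bs, β.WF) → (∀ β ∈ Bs, Solved vs β) →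
    (∀ β ∈ Bs, β.ProperReach ⟨s, n⟩ ⟨s, n⟩) →
    ∃ P : List (List ℕ), (∀ p ∈ P, p ≠ []) ∧
      ∀ β ∈ Bs, ∃ p ∈ P, ∀ ρ : σ.Val, β.Sat ρ → Periodic (ρ s n) p := by
  intro Bs
  induction Bs with
  | nil => exact fun _ _ _ => ⟨[], by simp, by simp⟩
  | cons β Bs' ih =>
    intro hwf hsol hreach
    obtain ⟨p, hpne, hp⟩ := cycle_periodic (hwf β (List.mem_cons_self))
      (hsol β (List.mem_cons_self)) (hreach β (List.mem_cons_self))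
    obtain ⟨P', h1, h2⟩ := ih (fun b hb => hwf b (List.mem_cons_of_mem β hb))
      (fun b hb => hsol b (List.mem_cons_of_mem β hb))
      (fun b hb => hreach b (List.mem_cons_of_mem β hb))
    refine ⟨p :: P', ?_, ?_⟩
    · intro q hq
      rcases List.mem_cons.mp hq with rfl | hq'
      · exact hpne
      · exact h1 q hq'
    · intro b hb
      rcases List.mem_cons.mp hb with rfl | hb'
      · exact ⟨p, List.mem_cons_self, hp⟩
      · obtain ⟨q, hq, hq2⟩ := h2 b hb'
        exact ⟨q, List.mem_cons_of_mem p hq, hq2⟩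

end Sig

/-- Let `v = ⟨s, n⟩` be a variable of a sort `s` with infinitely
many trees (`s ∉ S_FF ∩ S_FI`), let `β₁, …, β_m` be solved basic formulae in each
of which `v` is properly reachable from itself, and let `T` be a finite set of
trees of sort `s`. Then there is a tree `v* ∉ T` of sort `s` such that every
valuation assigning `v*` to `v` falsifies every `βᵢ`; moreover `v*` can be chosen
finite if `s ∉ S_FF` and infinite if `s ∉ S_FI`. -/
theorem contradict_recursive_constraints (σ : Sig)
    (s : σ.Srt) (n : ℕ) (hs : s ∉ Sig.SFF σ ∩ Sig.SFI σ)
    (Bs : List σ.Basic) (vs : List ((s : σ.Srt) × ℕ)) (hnd : vs.Nodup)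
    (hwf : ∀ β ∈ Bs, Sig.Basic.WF β) (hsol : ∀ β ∈ Bs, Sig.Solved vs β)
    (hreach : ∀ β ∈ Bs, Sig.Basic.ProperReach β ⟨s, n⟩ ⟨s, n⟩)
    (T : Set (σ.Tree s)) (hT : T.Finite) :
    (∃ vstar : σ.Tree s, vstar ∉ T ∧
      ∀ ρ : σ.Val, ρ s n = vstar → ∀ β ∈ Bs, ¬ Sig.Basic.Sat β ρ) ∧
    (s ∉ Sig.SFF σ → ∃ vstar : σ.Tree s, vstar.IsFinite ∧ vstar ∉ T ∧
      ∀ ρ : σ.Val, ρ s n = vstar → ∀ β ∈ Bs, ¬ Sig.Basic.Sat β ρ) ∧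
    (s ∉ Sig.SFI σ → ∃ vstar : σ.Tree s, ¬ vstar.IsFinite ∧ vstar ∉ T ∧
      ∀ ρ : σ.Val, ρ s n = vstar → ∀ β ∈ Bs, ¬ Sig.Basic.Sat β ρ) := by
  obtain ⟨P, hPne, hPβ⟩ := Sig.periods_exist s n Bs hwf hsol hreach
  have hfalsify_fin : ∀ vstar : σ.Tree s, vstar.IsFinite →
      ∀ ρ : σ.Val, ρ s n = vstar → ∀ β ∈ Bs, ¬ Sig.Basic.Sat β ρ := by
    intro v hvfin ρ hρ β hβ hsat
    obtain ⟨p, hpP, hper⟩ := hPβ β hβ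
    have h1 := hper ρ hsat
    rw [hρ] at h1
    exact Sig.Periodic.not_finite (hPne p hpP) h1 hvfin
  have hfalsify_av : ∀ vstar : σ.Tree s, (∀ p ∈ P, ¬ Sig.Periodic vstar p) →
      ∀ ρ : σ.Val, ρ s n = vstar → ∀ β ∈ Bs, ¬ Sig.Basic.Sat β ρ := by
    intro v hv ρ hρ β hβ hsat
    obtain ⟨p, hpP, hper⟩ := hPβ β hβ
    have h1 := hper ρ hsat
    rw [hρ] at h1
    exact hv p hpP h1
  have hFF : s ∉ Sig.SFF σ → ∃ vstar : σ.Tree s, vstar.IsFinite ∧ vstar ∉ T ∧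
      ∀ ρ : σ.Val, ρ s n = vstar → ∀ β ∈ Bs, ¬ Sig.Basic.Sat β ρ := by
    intro hsff
    have hinf : {t : σ.Tree s | t.IsFinite}.Infinite := hsff
    obtain ⟨v, hv1, hv2⟩ := (hinf.diff hT).nonempty
    exact ⟨v, hv1, hv2, hfalsify_fin v hv1⟩
  have hFI : s ∉ Sig.SFI σ → ∃ vstar : σ.Tree s, ¬ vstar.IsFinite ∧ vstar ∉ T ∧
      ∀ ρ : σ.Val, ρ s n = vstar → ∀ β ∈ Bs, ¬ Sig.Basic.Sat β ρ := by
    intro hsfi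
    have hinf : {t : σ.Tree s | ¬ t.IsFinite}.Infinite := hsfi
    have havoid := Sig.avoid hinf P hPne
    obtain ⟨v, hv1, hv2⟩ := (havoid.diff hT).nonempty
    exact ⟨v, hv1.1, hv2, hfalsify_av v hv1.2⟩
  refine ⟨?_, hFF, hFI⟩
  rcases not_and_or.mp (by simpa [Set.mem_inter_iff] using hs) with h | h
  · obtain ⟨v, _, h2, h3⟩ := hFF h
    exact ⟨v, h2, h3⟩
  · obtain ⟨v, _, h2, h3⟩ := hFI h
    exact ⟨v, h2, h3⟩
end
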